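/- arXiv:2408.06630 — 8 statements merged into one kernel-verified Lean document; each statement's English description precedes it below -/
import Mathlib

section
/- The following are equivalent for a Banach lattice E: (1) E is ∞-convex with ∞-convexity constant 1, i.e. ‖|x₁| ⊔ ⋯ ⊔ |xₙ|‖ ≤ max(‖x₁‖, …, ‖xₙ‖) for all n and all x₁, …, xₙ ∈ E; (2) for every x ∈ E there exists a contractive vector lattice homomorphism φ : E → ℝ with |φ(x)| = ‖x‖, and |φ(x)| ≤ ‖x‖ for every contractive vector lattice homomorphism φ : E → ℝ (so that ‖x‖ = max_φ |φ(x)| over all such φ). -/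
/-! Auxiliary lemmas for infima of sets of reals. -/

theorem le_add_csInf' {A B : Set ℝ} (hA : A.Nonempty) (hB : B.Nonempty) {c : ℝ}
    (h : ∀ a ∈ A, ∀ b ∈ B, c ≤ a + b) : c ≤ sInf A + sInf B := by
  have h1 : ∀ b ∈ B, c - b ≤ sInf A := fun b hb =>
    le_csInf hA fun a ha => by linarith [h a ha b hb]
  have h2 : c - sInf A ≤ sInf B := le_csInf hB fun b hb => by linarith [h1 b hb]
  linarith

theorem le_max_csInf' {A B : Set ℝ} (hA : A.Nonempty) (hB : B.Nonempty) {c : ℝ}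
    (h : ∀ a ∈ A, ∀ b ∈ B, c ≤ max a b) : c ≤ max (sInf A) (sInf B) := by
  by_contra hc
  push_neg at hc
  obtain ⟨h1, h2⟩ := max_lt_iff.mp hc
  obtain ⟨a, ha, hac⟩ := exists_lt_of_csInf_lt hA h1
  obtain ⟨b, hb, hbc⟩ := exists_lt_of_csInf_lt hB h2
  exact absurd (h a ha b hb) (not_le.mpr (max_lt hac hbc))

section Aux

variable {E : Type} [NormedAddCommGroup E] [Lattice E] [HasSolidNorm E] [IsOrderedAddMonoid E] [NormedSpace ℝ E]

/-! Positivity of the real scalar action on a normed lattice. -/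

theorem pow_two_nsmul_nonneg' (k : ℕ) (z : E) (h : 0 ≤ (2 ^ k : ℕ) • z) : 0 ≤ z := by
  induction k generalizing z with
  | zero => simpa using h
  | succ n ih =>
    apply nsmul_two_semiclosed
    apply ih
    rw [← mul_smul, ← pow_succ]
    exact h

theorem dyadic_smul_nonneg' (m k : ℕ) (y : E) (hy : 0 ≤ y) :
    0 ≤ ((m : ℝ) / 2 ^ k) • y := by
  apply pow_two_nsmul_nonneg' k
  have h1 : (2 ^ k : ℕ) • (((m : ℝ) / 2 ^ k) • y) = ((2 ^ k : ℝ) * ((m : ℝ) / 2 ^ k)) • y := by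
    rw [← Nat.cast_smul_eq_nsmul ℝ, smul_smul]
    norm_num
  rw [h1]
  have h2 : (2 ^ k : ℝ) * ((m : ℝ) / 2 ^ k) = (m : ℝ) := by
    field_simp
  rw [h2, ← Nat.cast_smul_eq_nsmul ℝ] at *
  exact nsmul_nonneg hy m |>.trans_eq (Nat.cast_smul_eq_nsmul ℝ m y).symm

theorem real_smul_nonneg' {t : ℝ} (ht : 0 ≤ t) {y : E} (hy : 0 ≤ y) : 0 ≤ t • y := by
  have hclosed : IsClosed {r : ℝ | 0 ≤ r • y} := by
    have : {r : ℝ | 0 ≤ r • y} = (fun r : ℝ => r • y) ⁻¹' {x : E | 0 ≤ x} := rfl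
    rw [this]
    exact isClosed_nonneg.preimage (continuous_id.smul continuous_const)
  have hmem : ∀ n : ℕ, ((Nat.floor (2 ^ n * t) : ℝ) / 2 ^ n) ∈ {r : ℝ | 0 ≤ r • y} :=
    fun n => dyadic_smul_nonneg' _ n y hy
  have hlim : Filter.Tendsto (fun n : ℕ => (Nat.floor (2 ^ n * t) : ℝ) / 2 ^ n)
      Filter.atTop (nhds t) := by
    rw [tendsto_iff_dist_tendsto_zero]
    apply squeeze_zero (fun n => dist_nonneg) (g := fun n : ℕ => (1 / 2 : ℝ) ^ n)
    · intro n
      have hfl := Nat.floor_le (by positivity : (0:ℝ) ≤ 2 ^ n * t)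
      have hfu := Nat.lt_floor_add_one (2 ^ n * t)
      have hpow : (0:ℝ) < 2 ^ n := by positivity
      have e : (Nat.floor (2 ^ n * t) : ℝ) / 2 ^ n - t
          = ((Nat.floor (2 ^ n * t) : ℝ) - 2 ^ n * t) / 2 ^ n := by field_simp
      have hnum : |(Nat.floor (2 ^ n * t) : ℝ) - 2 ^ n * t| ≤ 1 :=
        abs_le.mpr ⟨by linarith, by linarith⟩
      rw [Real.dist_eq, e, abs_div, abs_of_pos hpow, one_div_pow]
      gcongr
    · exact tendsto_pow_atTop_nhds_zero_of_lt_one (by norm_num) (by norm_num)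
  exact hclosed.mem_of_tendsto hlim (Filter.Eventually.of_forall hmem)

theorem real_smul_mono' {t : ℝ} (ht : 0 ≤ t) {y z : E} (hyz : y ≤ z) : t • y ≤ t • z := by
  have := real_smul_nonneg' ht (sub_nonneg.mpr hyz)
  rw [smul_sub] at this
  exact sub_nonneg.mp this

theorem smul_posPart' {t : ℝ} (ht : 0 ≤ t) (y : E) : t • (y ⊔ 0) = (t • y) ⊔ 0 := by
  rcases eq_or_lt_of_le ht with h0 | h0
  · rw [← h0]; simp
  apply le_antisymm
  · have h1 : t⁻¹ • ((t • y) ⊔ 0) ≥ y ⊔ 0 := by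
      apply sup_le
      · have := real_smul_mono' (inv_nonneg.mpr ht) (le_sup_left : t • y ≤ (t • y) ⊔ 0)
        rwa [inv_smul_smul₀ h0.ne'] at this
      · exact real_smul_nonneg' (inv_nonneg.mpr ht) (le_sup_right : (0:E) ≤ (t • y) ⊔ 0)
    have := real_smul_mono' ht h1
    rwa [smul_inv_smul₀ h0.ne'] at this
  · apply sup_le
    · exact real_smul_mono' ht le_sup_left
    · exact real_smul_nonneg' ht le_sup_right

theorem norm_posPart_le' (y : E) : ‖y ⊔ 0‖ ≤ ‖y‖ := by
  have h : |y ⊔ 0| ≤ |y| := by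
    rw [abs_of_nonneg (le_sup_right : (0:E) ≤ y ⊔ 0)]
    exact sup_le (le_abs_self y) (abs_nonneg y)
  exact norm_le_norm_of_abs_le_abs h

/-! "Good" functionals: sublinear, monotone, and sub-multiplicative with respect to `⊔`. -/

structure IsGood (p : E → ℝ) : Prop where
  add_le : ∀ y z, p (y + z) ≤ p y + p z
  smul_eq : ∀ t : ℝ, 0 ≤ t → ∀ y, p (t • y) = t * p y
  mono : Monotone p
  sup_le : ∀ y z, p (y ⊔ z) ≤ max (p y) (p z)

theorem IsGood.zero_eq {p : E → ℝ} (hp : IsGood p) : p 0 = 0 := by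
  have := hp.smul_eq 0 le_rfl 0; simpa using this

theorem IsGood.neg_add_nonneg {p : E → ℝ} (hp : IsGood p) (y : E) : 0 ≤ p y + p (-y) := by
  have h := hp.add_le y (-y); rw [add_neg_cancel, hp.zero_eq] at h; linarith

/-- The inf-convolution style shift of `p` along `v`. -/
def shiftSet (p : E → ℝ) (v y : E) : Set ℝ :=
  (fun t : ℝ => p (y + t • v) - t * p v) '' Set.Ici 0

noncomputable def shift (p : E → ℝ) (v y : E) : ℝ := sInf (shiftSet p v y)

theorem mem_shiftSet {p : E → ℝ} {v y : E} {t : ℝ} (ht : 0 ≤ t) :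
    p (y + t • v) - t * p v ∈ shiftSet p v y := ⟨t, ht, rfl⟩

theorem shiftSet_nonempty (p : E → ℝ) (v y : E) : (shiftSet p v y).Nonempty :=
  ⟨_, mem_shiftSet le_rfl⟩

theorem shiftSet_lb {p : E → ℝ} (hp : IsGood p) (v y : E) :
    ∀ r ∈ shiftSet p v y, -p (-y) ≤ r := by
  rintro r ⟨t, ht, rfl⟩
  simp only [Set.mem_Ici] at ht
  dsimp only
  have h1 : p (t • v) ≤ p (y + t • v) + p (-y) := by
    have := hp.add_le (y + t • v) (-y)
    simpa using this
  have h2 : p (t • v) = t * p v := hp.smul_eq t ht v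
  linarith

theorem shiftSet_bddBelow {p : E → ℝ} (hp : IsGood p) (v y : E) :
    BddBelow (shiftSet p v y) := ⟨_, shiftSet_lb hp v y⟩

theorem shift_le {p : E → ℝ} (hp : IsGood p) (v y : E) {t : ℝ} (ht : 0 ≤ t) :
    shift p v y ≤ p (y + t • v) - t * p v :=
  csInf_le (shiftSet_bddBelow hp v y) (mem_shiftSet ht)

theorem shift_le_self {p : E → ℝ} (hp : IsGood p) (v y : E) : shift p v y ≤ p y := by
  have := shift_le hp v y (le_refl (0:ℝ))
  simpa using this

theorem shiftSet_anti {p : E → ℝ} (hp : IsGood p) (v y : E) {t₁ t : ℝ} (h1 : 0 ≤ t₁)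
    (h : t₁ ≤ t) : p (y + t • v) - t * p v ≤ p (y + t₁ • v) - t₁ * p v := by
  have key : p (y + t • v) ≤ p (y + t₁ • v) + (t - t₁) * p v := by
    have h2 : y + t • v = (y + t₁ • v) + (t - t₁) • v := by
      rw [sub_smul]; abel
    rw [h2]
    calc p ((y + t₁ • v) + (t - t₁) • v) ≤ p (y + t₁ • v) + p ((t - t₁) • v) :=
          hp.add_le _ _
      _ = p (y + t₁ • v) + (t - t₁) * p v := by rw [hp.smul_eq _ (by linarith)]
  linarith

theorem isGood_shift {p : E → ℝ} (hp : IsGood p) (v : E) : IsGood (shift p v) := by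
  constructor
  · intro y z
    apply le_add_csInf' (shiftSet_nonempty p v y) (shiftSet_nonempty p v z)
    rintro a ⟨t₁, ht₁, rfl⟩ b ⟨t₂, ht₂, rfl⟩
    simp only [Set.mem_Ici] at ht₁ ht₂
    dsimp only
    have h1 : shift p v (y + z) ≤ p (y + z + (t₁ + t₂) • v) - (t₁ + t₂) * p v :=
      shift_le hp v _ (by linarith)
    have h2 : p (y + z + (t₁ + t₂) • v) ≤ p (y + t₁ • v) + p (z + t₂ • v) := by
      have : y + z + (t₁ + t₂) • v = (y + t₁ • v) + (z + t₂ • v) := by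
        rw [add_smul]; abel
      rw [this]; exact hp.add_le _ _
    nlinarith [h1, h2]
  · intro t ht y
    rcases eq_or_lt_of_le ht with h0 | h0
    · have hz : shift p v ((0:ℝ) • y) = 0 := by
        rw [zero_smul]
        apply le_antisymm
        · have := shift_le_self hp v 0
          rwa [hp.zero_eq] at this
        · apply le_csInf (shiftSet_nonempty p v 0)
          rintro r ⟨s, hs, rfl⟩
          simp only [Set.mem_Ici] at hs
          dsimp only
          rw [zero_add, hp.smul_eq s hs]
          simp
      rw [← h0, hz, zero_mul]
    · apply le_antisymm
      · rw [show t * shift p v y = t * sInf (shiftSet p v y) from rfl]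
        have : ∀ r ∈ shiftSet p v y, shift p v (t • y) / t ≤ r := by
          rintro r ⟨s, hs, rfl⟩
          simp only [Set.mem_Ici] at hs
          dsimp only
          rw [div_le_iff₀ h0]
          have h1 : shift p v (t • y) ≤ p (t • y + (t * s) • v) - (t * s) * p v :=
            shift_le hp v _ (by positivity)
          have h2 : p (t • y + (t * s) • v) = t * p (y + s • v) := by
            rw [show t • y + (t * s) • v = t • (y + s • v) by rw [smul_add, mul_smul]]
            exact hp.smul_eq t ht _
          rw [h2] at h1
          nlinarith
        have := le_csInf (shiftSet_nonempty p v y) this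
        calc t * shift p v y ≥ t * (shift p v (t • y) / t) :=
              mul_le_mul_of_nonneg_left this ht
          _ = shift p v (t • y) := by field_simp
      · apply le_csInf (shiftSet_nonempty p v (t • y))
        rintro r ⟨s, hs, rfl⟩
        simp only [Set.mem_Ici] at hs
        dsimp only
        have h1 : shift p v y ≤ p (y + (s / t) • v) - (s / t) * p v :=
          shift_le hp v _ (by positivity)
        have h2 : p (t • y + s • v) = t * p (y + (s / t) • v) := by
          rw [show t • y + s • v = t • (y + (s / t) • v) by
            rw [smul_add, smul_smul]; field_simp]
          exact hp.smul_eq t ht _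
        rw [h2]
        have := mul_le_mul_of_nonneg_left h1 ht
        calc t * shift p v y ≤ t * (p (y + (s / t) • v) - s / t * p v) := this
          _ = t * p (y + (s / t) • v) - s * p v := by field_simp
  · intro y z hyz
    apply le_csInf (shiftSet_nonempty p v z)
    rintro r ⟨t, ht, rfl⟩
    simp only [Set.mem_Ici] at ht
    dsimp only
    calc shift p v y ≤ p (y + t • v) - t * p v := shift_le hp v y ht
      _ ≤ p (z + t • v) - t * p v := by
          have := hp.mono (add_le_add hyz (le_refl (t • v)))
          linarith
  · intro y z
    apply le_max_csInf' (shiftSet_nonempty p v y) (shiftSet_nonempty p v z)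
    rintro a ⟨t₁, ht₁, rfl⟩ b ⟨t₂, ht₂, rfl⟩
    simp only [Set.mem_Ici] at ht₁ ht₂
    dsimp only
    set t := max t₁ t₂ with htd
    have ht : 0 ≤ t := le_trans ht₁ (le_max_left _ _)
    have h1 : shift p v (y ⊔ z) ≤ p ((y ⊔ z) + t • v) - t * p v := shift_le hp v _ ht
    have h2 : (y ⊔ z) + t • v = (y + t • v) ⊔ (z + t • v) := by
      rw [sup_add]
    have h3 : p ((y + t • v) ⊔ (z + t • v)) ≤ max (p (y + t • v)) (p (z + t • v)) :=
      hp.sup_le _ _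
    have h4 : p (y + t • v) - t * p v ≤ p (y + t₁ • v) - t₁ * p v :=
      shiftSet_anti hp v y ht₁ (le_max_left _ _)
    have h5 : p (z + t • v) - t * p v ≤ p (z + t₂ • v) - t₂ * p v :=
      shiftSet_anti hp v z ht₂ (le_max_right _ _)
    rw [h2] at h1
    have : p ((y + t • v) ⊔ (z + t • v)) - t * p v ≤
        max (p (y + t₁ • v) - t₁ * p v) (p (z + t₂ • v) - t₂ * p v) := by
      rcases max_cases (p (y + t • v)) (p (z + t • v)) with ⟨hm, _⟩ | ⟨hm, _⟩
      · rw [hm] at h3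
        exact le_trans (by linarith) (le_max_left _ _)
      · rw [hm] at h3
        exact le_trans (by linarith) (le_max_right _ _)
    linarith

/-! Zorn's lemma: existence of a minimal good functional below a given one. -/

def valSet (c : Set ((E → ℝ)ᵒᵈ)) (y : E) : Set ℝ :=
  (fun q : (E → ℝ)ᵒᵈ => OrderDual.ofDual q y) '' c

theorem exists_minimal_good (p : E → ℝ) (hp : IsGood p) :
    ∃ q : E → ℝ, (IsGood q ∧ q ≤ p) ∧
      ∀ r : E → ℝ, IsGood r → r ≤ p → r ≤ q → q ≤ r := by
  set S : Set ((E → ℝ)ᵒᵈ) := {q | IsGood (OrderDual.ofDual q) ∧ OrderDual.ofDual q ≤ p} with hS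
  have hchain : ∀ c ⊆ S, IsChain (· ≤ ·) c → ∃ ub ∈ S, ∀ z ∈ c, z ≤ ub := by
    intro c hcS hc
    rcases c.eq_empty_or_nonempty with rfl | ⟨q₀, hq₀⟩
    · exact ⟨OrderDual.toDual p, ⟨hp, le_rfl⟩, fun z hz => absurd hz (Set.notMem_empty z)⟩
    have hmemS : ∀ q ∈ c, IsGood (OrderDual.ofDual q) ∧ OrderDual.ofDual q ≤ p :=
      fun q hq => hcS hq
    have hvne : ∀ y, (valSet c y).Nonempty := fun y => ⟨_, q₀, hq₀, rfl⟩
    have hvlb : ∀ y, ∀ z ∈ valSet c y, -p (-y) ≤ z := by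
      rintro y _ ⟨q, hq, rfl⟩
      obtain ⟨hq1, hq2⟩ := hmemS q hq
      have h1 := hq1.neg_add_nonneg y
      have h2 := hq2 (-y)
      linarith
    have hvbdd : ∀ y, BddBelow (valSet c y) := fun y => ⟨_, hvlb y⟩
    set r : E → ℝ := fun y => sInf (valSet c y) with hr
    have hrle : ∀ q ∈ c, ∀ y, r y ≤ OrderDual.ofDual q y := fun q hq y =>
      csInf_le (hvbdd y) ⟨q, hq, rfl⟩
    have htot : ∀ q₁ ∈ c, ∀ q₂ ∈ c, (OrderDual.ofDual q₁ ≤ OrderDual.ofDual q₂)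
        ∨ (OrderDual.ofDual q₂ ≤ OrderDual.ofDual q₁) := by
      intro q₁ h₁ q₂ h₂
      rcases eq_or_ne q₁ q₂ with rfl | hne
      · exact Or.inl le_rfl
      rcases hc h₁ h₂ hne with h | h
      · exact Or.inr h
      · exact Or.inl h
    have hrgood : IsGood r := by
      constructor
      · intro y z
        apply le_add_csInf' (hvne y) (hvne z)
        rintro a ⟨q₁, hq₁, rfl⟩ b ⟨q₂, hq₂, rfl⟩
        rcases htot q₁ hq₁ q₂ hq₂ with h | h
        · have := (hmemS q₁ hq₁).1.add_le y z
          have h2 := hrle q₁ hq₁ (y + z)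
          have h3 := h z
          try dsimp only at *
          linarith
        · have := (hmemS q₂ hq₂).1.add_le y z
          have h2 := hrle q₂ hq₂ (y + z)
          have h3 := h y
          try dsimp only at *
          linarith
      · intro t ht y
        rcases eq_or_lt_of_le ht with h0 | h0
        · subst h0
          have hz : ∀ q ∈ c, OrderDual.ofDual q ((0:ℝ) • y) = 0 := by
            intro q hq
            rw [zero_smul]
            exact (hmemS q hq).1.zero_eq
          rw [zero_mul]
          apply le_antisymm
          · have h9 := csInf_le (hvbdd ((0:ℝ) • y)) ⟨q₀, hq₀, rfl⟩
            exact le_trans h9 (hz q₀ hq₀).le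
          · exact le_csInf (hvne _) (by rintro z ⟨q, hq, rfl⟩; exact (hz q hq).ge)
        · apply le_antisymm
          · have key : ∀ q ∈ c, r (t • y) / t ≤ OrderDual.ofDual q y := by
              intro q hq
              rw [div_le_iff₀ h0]
              have h1 := hrle q hq (t • y)
              have h2 := (hmemS q hq).1.smul_eq t ht y
              try dsimp only at *
              nlinarith
            have : r (t • y) / t ≤ r y :=
              le_csInf (hvne y) (by rintro z ⟨q, hq, rfl⟩; exact key q hq)
            calc r (t • y) = t * (r (t • y) / t) := by field_simp
              _ ≤ t * r y := by nlinarith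
          · apply le_csInf (hvne _)
            rintro z ⟨q, hq, rfl⟩
            have h1 := hrle q hq y
            have h2 := (hmemS q hq).1.smul_eq t ht y
            try dsimp only at *
            nlinarith
      · intro y z hyz
        apply le_csInf (hvne z)
        rintro w ⟨q, hq, rfl⟩
        exact le_trans (hrle q hq y) ((hmemS q hq).1.mono hyz)
      · intro y z
        apply le_max_csInf' (hvne y) (hvne z)
        rintro a ⟨q₁, hq₁, rfl⟩ b ⟨q₂, hq₂, rfl⟩
        rcases htot q₁ hq₁ q₂ hq₂ with h | h
        · calc r (y ⊔ z) ≤ OrderDual.ofDual q₁ (y ⊔ z) := hrle q₁ hq₁ _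
            _ ≤ max (OrderDual.ofDual q₁ y) (OrderDual.ofDual q₁ z) := (hmemS q₁ hq₁).1.sup_le y z
            _ ≤ max (OrderDual.ofDual q₁ y) (OrderDual.ofDual q₂ z) :=
                max_le_max le_rfl (h z)
        · calc r (y ⊔ z) ≤ OrderDual.ofDual q₂ (y ⊔ z) := hrle q₂ hq₂ _
            _ ≤ max (OrderDual.ofDual q₂ y) (OrderDual.ofDual q₂ z) := (hmemS q₂ hq₂).1.sup_le y z
            _ ≤ max (OrderDual.ofDual q₁ y) (OrderDual.ofDual q₂ z) :=
                max_le_max (h y) le_rfl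
    refine ⟨OrderDual.toDual r, ⟨hrgood, fun y => le_trans (hrle q₀ hq₀ y) ((hmemS q₀ hq₀).2 y)⟩,
      fun q hq => ?_⟩
    intro y
    exact hrle q hq y
  obtain ⟨m, hm⟩ := zorn_le₀ S hchain
  refine ⟨OrderDual.ofDual m, hm.prop, fun r hr1 hr2 hr3 => ?_⟩
  have hmr : m ≤ OrderDual.toDual r := hr3
  exact hm.le_of_ge ⟨hr1, hr2⟩ hmr

/-! Extraction of a lattice homomorphism below a good functional. -/

theorem exists_latticeHom_fun (p : E → ℝ) (hp : IsGood p) (v : E) :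
    ∃ q : E → ℝ, (∀ y z, q (y + z) = q y + q z) ∧ (∀ (t : ℝ) (y : E), q (t • y) = t * q y) ∧
      Monotone q ∧ (∀ y z, q (y ⊔ z) = max (q y) (q z)) ∧ (∀ y, q y ≤ p y) ∧ q v = p v := by
  have hp₁g : IsGood (shift p v) := isGood_shift hp v
  obtain ⟨q, ⟨hqg, hqle⟩, hmin⟩ := exists_minimal_good (shift p v) hp₁g
  have hqlep : ∀ y, q y ≤ p y := fun y => le_trans (hqle y) (shift_le_self hp v y)
  have hodd : ∀ w, q (-w) = -q w := by
    intro w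
    have hsub : IsGood (shift q w) := isGood_shift hqg w
    have hle : ∀ y, shift q w y ≤ q y := fun y => shift_le_self hqg w y
    have heq : q ≤ shift q w := hmin _ hsub (fun y => le_trans (hle y) (hqle y)) hle
    have h1 : shift q w (-w) ≤ -q w := by
      have h := shift_le hqg w (-w) (zero_le_one)
      rw [one_smul, neg_add_cancel, hqg.zero_eq, one_mul, zero_sub] at h
      exact h
    have h2 : q (-w) ≤ -q w := le_trans (heq (-w)) h1
    have h3 := hqg.neg_add_nonneg w
    linarith
  have hadd : ∀ y z, q (y + z) = q y + q z := by
    intro y z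
    have h1 := hqg.add_le y z
    have h2 := hqg.add_le (-y) (-z)
    rw [← neg_add, hodd, hodd, hodd] at h2
    linarith
  have hsmul : ∀ (t : ℝ) (y : E), q (t • y) = t * q y := by
    intro t y
    rcases le_or_gt 0 t with ht | ht
    · exact hqg.smul_eq t ht y
    · have h1 : q ((-t) • y) = (-t) * q y := hqg.smul_eq (-t) (by linarith) y
      have h2 : q (t • y) = -q ((-t) • y) := by
        rw [show (-t) • y = -(t • y) by rw [neg_smul], hodd]
        ring
      rw [h2, h1]; ring
  have hsup : ∀ y z, q (y ⊔ z) = max (q y) (q z) := by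
    intro y z
    apply le_antisymm (hqg.sup_le y z)
    exact max_le (hqg.mono le_sup_left) (hqg.mono le_sup_right)
  have hqv : q v = p v := by
    have h1 : q v ≤ p v := hqlep v
    have h2 : shift p v (-v) ≤ -p v := by
      have h := shift_le hp v (-v) (zero_le_one)
      rw [one_smul, neg_add_cancel, hp.zero_eq, one_mul, zero_sub] at h
      exact h
    have h3 : q (-v) ≤ -p v := le_trans (hqle (-v)) h2
    rw [hodd] at h3
    linarith
  exact ⟨q, hadd, hsmul, hqg.mono, hsup, hqlep, hqv⟩

/-- The norm of the positive part is a good functional, given the binary M-inequality. -/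
theorem isGood_norm_posPart (H : ∀ a b : E, 0 ≤ a → 0 ≤ b → ‖a ⊔ b‖ ≤ max ‖a‖ ‖b‖) :
    IsGood (fun y : E => ‖y ⊔ 0‖) := by
  have habs : ∀ y : E, |y ⊔ 0| = y ⊔ 0 := fun y => abs_of_nonneg le_sup_right
  constructor
  · intro y z
    calc ‖(y + z) ⊔ 0‖ ≤ ‖(y ⊔ 0) + (z ⊔ 0)‖ := by
          apply norm_le_norm_of_abs_le_abs
          rw [habs, abs_of_nonneg (add_nonneg le_sup_right le_sup_right)]
          exact sup_le (add_le_add le_sup_left le_sup_left)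
            (add_nonneg le_sup_right le_sup_right)
      _ ≤ ‖y ⊔ 0‖ + ‖z ⊔ 0‖ := norm_add_le _ _
  · intro t ht y
    rw [← smul_posPart' ht, norm_smul, Real.norm_eq_abs, abs_of_nonneg ht]
  · intro y z h
    apply norm_le_norm_of_abs_le_abs
    rw [habs, habs]
    exact sup_le_sup_right h 0
  · intro y z
    rw [sup_sup_distrib_right y z 0]
    exact H _ _ le_sup_right le_sup_right

end Aux

/-- A Banach lattice is ∞-convex with ∞-convexity constant 1 if and only if the norm of
every element is attained as a maximum over contractive vector lattice homomorphisms
into `ℝ`. -/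
theorem inftyConvex_iff_norm_attained_by_real_latticeHoms
    (E : Type) [NormedAddCommGroup E] [Lattice E] [HasSolidNorm E] [IsOrderedAddMonoid E] [NormedSpace ℝ E] [CompleteSpace E] :
    (∀ (n : ℕ) (x : Fin (n + 1) → E),
        ‖Finset.univ.sup' Finset.univ_nonempty (fun i => |x i|)‖ ≤
          Finset.univ.sup' Finset.univ_nonempty (fun i => ‖x i‖)) ↔
    (∀ x : E,
        (∀ φ : E →L[ℝ] ℝ, ‖φ‖ ≤ 1 → (∀ a b : E, φ (a ⊔ b) = φ a ⊔ φ b) → |φ x| ≤ ‖x‖) ∧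
        (∃ φ : E →L[ℝ] ℝ, ‖φ‖ ≤ 1 ∧ (∀ a b : E, φ (a ⊔ b) = φ a ⊔ φ b) ∧ |φ x| = ‖x‖)) := by
  constructor
  · intro H x
    -- binary M-inequality
    have H2 : ∀ a b : E, 0 ≤ a → 0 ≤ b → ‖a ⊔ b‖ ≤ max ‖a‖ ‖b‖ := by
      intro a b ha hb
      have h := H 1 ![a, b]
      have e1 : (Finset.univ.sup' Finset.univ_nonempty (fun i : Fin 2 => |![a, b] i|)) =
          |a| ⊔ |b| := by
        simp [Fin.univ_succ]
      have e2 : (Finset.univ.sup' Finset.univ_nonempty (fun i : Fin 2 => ‖![a, b] i‖)) =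
          ‖a‖ ⊔ ‖b‖ := by
        simp [Fin.univ_succ]
      rw [e1, e2, abs_of_nonneg ha, abs_of_nonneg hb] at h
      exact h
    have hp : IsGood (fun y : E => ‖y ⊔ 0‖) := isGood_norm_posPart H2
    obtain ⟨q, hadd, hsmul, hmono, hsup, hqle, hqv⟩ :=
      exists_latticeHom_fun (fun y : E => ‖y ⊔ 0‖) hp |x|
    have hbound : ∀ y : E, |q y| ≤ ‖y‖ := by
      intro y
      rw [abs_le]
      constructor
      · have h1 : q (-y) ≤ ‖(-y) ⊔ 0‖ := hqle (-y)
        have h2 : ‖(-y) ⊔ 0‖ ≤ ‖y‖ := by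
          have := norm_posPart_le' (-y)
          rwa [norm_neg] at this
        have h3 : q (-y) = -q y := by
          rw [show -y = (-1 : ℝ) • y by simp, hsmul]
          ring
        linarith
      · exact le_trans (hqle y) (norm_posPart_le' y)
    let φL : E →ₗ[ℝ] ℝ :=
      { toFun := q
        map_add' := hadd
        map_smul' := fun t y => (hsmul t y).trans rfl }
    let φ : E →L[ℝ] ℝ := LinearMap.mkContinuous φL 1
      (fun y => by simpa [Real.norm_eq_abs, φL] using hbound y)
    have hφapp : ∀ y, φ y = q y := fun y => rfl
    refine ⟨fun ψ h1 _ => ?_, φ, ?_, ?_, ?_⟩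
    · calc |ψ x| = ‖ψ x‖ := (Real.norm_eq_abs _).symm
        _ ≤ ‖ψ‖ * ‖x‖ := ψ.le_opNorm x
        _ ≤ 1 * ‖x‖ := mul_le_mul_of_nonneg_right h1 (norm_nonneg x)
        _ = ‖x‖ := one_mul _
    · exact LinearMap.mkContinuous_norm_le φL zero_le_one _
    · intro a b
      show q (a ⊔ b) = q a ⊔ q b
      exact (hsup a b).trans rfl
    · have h1 : q |x| = |q x| := by
        rw [show |x| = x ⊔ (-x) from rfl, hsup]
        have : q (-x) = -q x := by
          rw [show -x = (-1 : ℝ) • x by simp, hsmul]; ring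
        rw [this, abs_eq_max_neg]
      have h2 : q |x| = ‖x‖ := by
        rw [hqv]
        try dsimp only
        rw [sup_eq_left.mpr (abs_nonneg x), norm_abs_eq_norm]
      rw [hφapp, ← h1, h2]
  · intro H n x
    set s := Finset.univ.sup' Finset.univ_nonempty (fun i => |x i|) with hs
    obtain ⟨-, φ, hφ1, hφ2, hφ3⟩ := H s
    have habs : ∀ y : E, φ |y| = |φ y| := by
      intro y
      rw [show |y| = y ⊔ (-y) from rfl, hφ2, map_neg, abs_eq_max_neg]
    have hkey : φ s = Finset.univ.sup' Finset.univ_nonempty (fun i => φ |x i|) := by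
      rw [hs, Finset.comp_sup'_eq_sup'_comp Finset.univ_nonempty (⇑φ) hφ2]
      rfl
    have hs0 : (0 : E) ≤ s := by
      rw [hs]
      exact le_trans (abs_nonneg (x 0))
        (Finset.le_sup' (fun i => |x i|) (Finset.mem_univ 0))
    have hφs0 : 0 ≤ φ s := by
      have h := hφ2 s 0
      rw [sup_eq_left.mpr hs0, map_zero] at h
      rw [h]
      exact le_max_right _ _
    calc ‖s‖ = |φ s| := hφ3.symm
      _ = φ s := abs_of_nonneg hφs0
      _ = Finset.univ.sup' Finset.univ_nonempty (fun i => φ |x i|) := hkey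
      _ ≤ Finset.univ.sup' Finset.univ_nonempty (fun i => ‖x i‖) := by
          apply Finset.sup'_mono_fun
          intro i _
          rw [habs]
          calc |φ (x i)| = ‖φ (x i)‖ := (Real.norm_eq_abs _).symm
            _ ≤ ‖φ‖ * ‖x i‖ := φ.le_opNorm _
            _ ≤ 1 * ‖x i‖ := mul_le_mul_of_nonneg_right hφ1 (norm_nonneg _)
            _ = ‖x i‖ := one_mul _
end

section
/- Let E be a Banach lattice, let ι be an index type, and for each i ∈ ι let φᵢ : E → Eᵢ be a contractive vector lattice homomorphism into a Banach lattice Eᵢ. Suppose that ‖x‖ = ⨆_{i ∈ ι} ‖φᵢ(x)‖ for every x ∈ E. If every Eᵢ satisfies ‖|a| ⊔ |b|‖ ≤ max(‖a‖, ‖b‖) for all a, b ∈ Eᵢ (∞-convexity with constant 1), then E also satisfies ‖|a| ⊔ |b|‖ ≤ max(‖a‖, ‖b‖) for all a, b ∈ E. -/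
/-- If a Banach lattice `E` admits a norming family of contractive vector lattice
homomorphisms into Banach lattices that are all ∞-convex with ∞-convexity constant 1,
then `E` is ∞-convex with ∞-convexity constant 1. -/
theorem inftyConvex_of_norming_family_of_latticeHoms
    (E : Type) [NormedAddCommGroup E] [Lattice E] [HasSolidNorm E] [IsOrderedAddMonoid E] [NormedSpace ℝ E] [CompleteSpace E]
    (ι : Type) (F : ι → Type)
    [∀ i, NormedAddCommGroup (F i)] [∀ i, Lattice (F i)]
    [∀ i, HasSolidNorm (F i)] [∀ i, IsOrderedAddMonoid (F i)] [∀ i, NormedSpace ℝ (F i)]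
    [∀ i, CompleteSpace (F i)]
    (φ : ∀ i, E →L[ℝ] F i)
    (hcontr : ∀ i, ‖φ i‖ ≤ 1)
    (hhom : ∀ i, ∀ a b : E, φ i (a ⊔ b) = φ i a ⊔ φ i b)
    (hnorming : ∀ x : E, ‖x‖ = ⨆ i, ‖φ i x‖)
    (hconv : ∀ i, ∀ a b : F i, ‖|a| ⊔ |b|‖ ≤ max ‖a‖ ‖b‖) :
    ∀ a b : E, ‖|a| ⊔ |b|‖ ≤ max ‖a‖ ‖b‖ := by
  intro a b
  have habs : ∀ i, ∀ x : E, φ i |x| = |φ i x| := by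
    intro i x
    have := hhom i x (-x)
    simpa [abs, map_neg] using this
  rw [hnorming (|a| ⊔ |b|)]
  apply Real.iSup_le
  · intro i
    have h1 : ‖φ i a‖ ≤ ‖a‖ :=
      le_trans ((φ i).le_opNorm a) (by nlinarith [hcontr i, norm_nonneg a])
    have h2 : ‖φ i b‖ ≤ ‖b‖ :=
      le_trans ((φ i).le_opNorm b) (by nlinarith [hcontr i, norm_nonneg b])
    calc ‖φ i (|a| ⊔ |b|)‖ = ‖|φ i a| ⊔ |φ i b|‖ := by rw [hhom, habs, habs]
      _ ≤ max ‖φ i a‖ ‖φ i b‖ := hconv i _ _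
      _ ≤ max ‖a‖ ‖b‖ := max_le_max h1 h2
  · exact le_max_of_le_left (norm_nonneg a)
end

section
/- For every pre-ordered real vector space (V, V⁺) there exists a free vector lattice over (V, V⁺): a vector lattice F together with a positive linear map j : V → F such that for every vector lattice G and every positive linear map φ : V → G there exists a unique vector lattice homomorphism φ̄ : F → G with φ̄ ∘ j = φ. Moreover, F is generated by j(V) as a vector lattice: the only vector sublattice of F (subset closed under the linear operations and the lattice operations) containing j(V) is F itself. -/
/-- A vector lattice: a lattice-ordered real vector space. -/
class VectorLattice (F : Type) extends Lattice F, AddCommGroup F, Module ℝ F where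
  add_le_add_left' : ∀ a b : F, a ≤ b → ∀ c : F, c + a ≤ c + b
  smul_nonneg' : ∀ (r : ℝ) (a : F), 0 ≤ r → 0 ≤ a → 0 ≤ r • a

/-- A wedge in a real vector space. -/
def IsWedge {V : Type} [AddCommGroup V] [Module ℝ V] (C : Set V) : Prop :=
  0 ∈ C ∧ ∀ (a b : ℝ) (x y : V), 0 ≤ a → 0 ≤ b → x ∈ C → y ∈ C → a • x + b • y ∈ C

/-- A free vector lattice over the pre-ordered vector space `(V, C)`: a vector lattice `F`
together with a positive linear map `j : V → F` with the universal property that every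
positive linear map from `V` into a vector lattice factors uniquely through `j` via a
vector lattice homomorphism; moreover `F` is generated by `j(V)` as a vector lattice. -/
structure FreeVectorLatticeWitness (V : Type) [AddCommGroup V] [Module ℝ V]
    (C : Set V) where
  F : Type
  [instF : VectorLattice F]
  j : V →ₗ[ℝ] F
  j_pos : ∀ v ∈ C, 0 ≤ j v
  universal : ∀ (G : Type) [VectorLattice G] (φ : V →ₗ[ℝ] G), (∀ v ∈ C, 0 ≤ φ v) →
    ∃! ψ : F →ₗ[ℝ] G, (∀ a b : F, ψ (a ⊔ b) = ψ a ⊔ ψ b) ∧ ∀ v : V, ψ (j v) = φ v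
  generated : ∀ S : Set F, (∀ v : V, j v ∈ S) →
    (∀ a ∈ S, ∀ b ∈ S, a + b ∈ S) → (∀ (r : ℝ), ∀ a ∈ S, r • a ∈ S) →
    (∀ a ∈ S, ∀ b ∈ S, a ⊔ b ∈ S) → (∀ a ∈ S, ∀ b ∈ S, a ⊓ b ∈ S) →
    ∀ f : F, f ∈ S

namespace FVLConstruction

instance covl (G : Type) [VectorLattice G] : CovariantClass G G (· + ·) (· ≤ ·) :=
  ⟨fun c _ _ h => VectorLattice.add_le_add_left' _ _ h c⟩

instance covr (G : Type) [VectorLattice G] :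
    CovariantClass G G (Function.swap (· + ·)) (· ≤ ·) :=
  ⟨fun c a b h => by
    simpa [Function.swap, add_comm] using VectorLattice.add_le_add_left' a b h c⟩

lemma g_neg_smul_sup {G : Type} [VectorLattice G] (x y : G) :
    (-1 : ℝ) • (((-1 : ℝ) • x) ⊔ ((-1 : ℝ) • y)) = x ⊓ y := by
  simp only [neg_one_smul, neg_sup, neg_neg]

variable {V : Type} [AddCommGroup V] [Module ℝ V]

/-- Terms of the free vector lattice over `V`. -/
inductive FreeTerm (V : Type) : Type where
  | of : V → FreeTerm V
  | add : FreeTerm V → FreeTerm V → FreeTerm V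
  | smul : ℝ → FreeTerm V → FreeTerm V
  | sup : FreeTerm V → FreeTerm V → FreeTerm V

/-- Evaluation of a term along a linear map into a vector lattice. -/
def evalT {G : Type} [VectorLattice G] (φ : V →ₗ[ℝ] G) : FreeTerm V → G
  | .of v => φ v
  | .add t s => evalT φ t + evalT φ s
  | .smul r t => r • evalT φ t
  | .sup t s => evalT φ t ⊔ evalT φ s

variable (C : Set V)

/-- Two terms are related iff they have equal values under every positive linear
evaluation into any vector lattice. -/
def trel (t s : FreeTerm V) : Prop :=
  ∀ (G : Type) [VectorLattice G] (φ : V →ₗ[ℝ] G), (∀ v ∈ C, 0 ≤ φ v) →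
    evalT φ t = evalT φ s

def tsetoid : Setoid (FreeTerm V) where
  r := trel C
  iseqv := ⟨fun _ _ _ _ _ => rfl,
    fun h G _ φ hφ => (h G φ hφ).symm,
    fun h1 h2 G _ φ hφ => (h1 G φ hφ).trans (h2 G φ hφ)⟩

/-- The free vector lattice, as a quotient of the term algebra. -/
def FVL : Type := Quotient (tsetoid C)

variable {C}

def mk (t : FreeTerm V) : FVL C := Quotient.mk (tsetoid C) t

lemma sound {t s : FreeTerm V}
    (h : ∀ (G : Type) [VectorLattice G] (φ : V →ₗ[ℝ] G), (∀ v ∈ C, 0 ≤ φ v) →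
      evalT φ t = evalT φ s) : (mk t : FVL C) = mk s :=
  Quotient.sound h

lemma exact {t s : FreeTerm V} (h : (mk t : FVL C) = mk s) :
    ∀ (G : Type) [VectorLattice G] (φ : V →ₗ[ℝ] G), (∀ v ∈ C, 0 ≤ φ v) →
      evalT φ t = evalT φ s :=
  Quotient.exact h

instance : Add (FVL C) :=
  ⟨Quotient.map₂ FreeTerm.add (fun _ _ h1 _ _ h2 G _ φ hφ => by
    simp only [evalT, h1 G φ hφ, h2 G φ hφ])⟩

instance : SMul ℝ (FVL C) :=
  ⟨fun r => Quotient.map (FreeTerm.smul r) (fun _ _ h G _ φ hφ => by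
    simp only [evalT, h G φ hφ])⟩

instance : Max (FVL C) :=
  ⟨Quotient.map₂ FreeTerm.sup (fun _ _ h1 _ _ h2 G _ φ hφ => by
    simp only [evalT, h1 G φ hφ, h2 G φ hφ])⟩

instance : Zero (FVL C) := ⟨mk (FreeTerm.of 0)⟩
instance : Neg (FVL C) := ⟨fun a => (-1 : ℝ) • a⟩
instance : Sub (FVL C) := ⟨fun a b => a + -b⟩
instance : Min (FVL C) := ⟨fun a b => -(-a ⊔ -b)⟩

lemma mk_add (t s : FreeTerm V) : (mk t + mk s : FVL C) = mk (t.add s) := rfl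
lemma mk_smul (r : ℝ) (t : FreeTerm V) : (r • mk t : FVL C) = mk (t.smul r) := rfl
lemma mk_sup (t s : FreeTerm V) : (mk t ⊔ mk s : FVL C) = mk (t.sup s) := rfl
lemma mk_neg (t : FreeTerm V) : (-(mk t) : FVL C) = mk (t.smul (-1)) := rfl
lemma mk_inf (t s : FreeTerm V) :
    (mk t ⊓ mk s : FVL C) = mk (((t.smul (-1)).sup (s.smul (-1))).smul (-1)) := rfl
lemma mk_zero : (0 : FVL C) = mk (FreeTerm.of 0) := rfl

lemma ind {motive : FVL C → Prop} (h : ∀ t, motive (mk t)) : ∀ a, motive a :=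
  fun a => Quotient.ind h a

instance : AddCommGroup (FVL C) where
  add_assoc := by
    refine ind fun a => ind fun b => ind fun c => ?_
    exact sound fun G _ φ hφ => by simp [evalT, add_assoc]
  add_comm := by
    refine ind fun a => ind fun b => ?_
    exact sound fun G _ φ hφ => by simp [evalT, add_comm]
  zero_add := by
    refine ind fun a => ?_
    exact sound fun G _ φ hφ => by simp [evalT]
  add_zero := by
    refine ind fun a => ?_
    exact sound fun G _ φ hφ => by simp [evalT]
  neg_add_cancel := by
    refine ind fun a => ?_
    exact sound fun G _ φ hφ => by simp [evalT]
  nsmul := nsmulRec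
  zsmul := zsmulRec
  sub_eq_add_neg _ _ := rfl

instance : Module ℝ (FVL C) where
  one_smul := by
    refine ind fun a => ?_
    exact sound fun G _ φ hφ => by simp [evalT]
  mul_smul r s := by
    refine ind fun a => ?_
    exact sound fun G _ φ hφ => by simp [evalT, mul_smul]
  smul_zero r := sound fun G _ φ hφ => by simp [evalT]
  smul_add r := by
    refine ind fun a => ind fun b => ?_
    exact sound fun G _ φ hφ => by simp [evalT, smul_add]
  add_smul r s := by
    refine ind fun a => ?_
    exact sound fun G _ φ hφ => by simp [evalT, add_smul]
  zero_smul := by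
    refine ind fun a => ?_
    exact sound fun G _ φ hφ => by simp [evalT]

instance : PartialOrder (FVL C) where
  le a b := a ⊔ b = b
  le_refl := by
    refine ind fun a => ?_
    show mk _ = mk _
    exact sound fun G _ φ hφ => by simp [evalT]
  le_trans := by
    refine ind fun a => ind fun b => ind fun c => ?_
    intro hab hbc
    have h1 := exact hab
    have h2 := exact hbc
    refine sound fun G _ φ hφ => ?_
    have e1 : evalT φ a ⊔ evalT φ b = evalT φ b := h1 G φ hφ
    have e2 : evalT φ b ⊔ evalT φ c = evalT φ c := h2 G φ hφ
    show evalT φ a ⊔ evalT φ c = evalT φ c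
    calc evalT φ a ⊔ evalT φ c = evalT φ a ⊔ (evalT φ b ⊔ evalT φ c) := by rw [e2]
      _ = (evalT φ a ⊔ evalT φ b) ⊔ evalT φ c := (sup_assoc ..).symm
      _ = evalT φ b ⊔ evalT φ c := by rw [e1]
      _ = evalT φ c := e2
  le_antisymm := by
    refine ind fun a => ind fun b => ?_
    intro hab hba
    have h1 := exact hab
    have h2 := exact hba
    refine sound fun G _ φ hφ => ?_
    have e1 : evalT φ a ⊔ evalT φ b = evalT φ b := h1 G φ hφ
    have e2 : evalT φ b ⊔ evalT φ a = evalT φ a := h2 G φ hφ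
    calc evalT φ a = evalT φ b ⊔ evalT φ a := e2.symm
      _ = evalT φ a ⊔ evalT φ b := sup_comm ..
      _ = evalT φ b := e1

lemma le_def {a b : FVL C} : a ≤ b ↔ a ⊔ b = b := Iff.rfl

instance : Lattice (FVL C) where
  sup := Max.max
  inf := Min.min
  le_sup_left := by
    refine ind fun a => ind fun b => ?_
    show mk _ ⊔ (mk _ ⊔ mk _) = mk _ ⊔ mk _
    exact sound fun G _ φ hφ => by
      simp [evalT, ← sup_assoc]
  le_sup_right := by
    refine ind fun a => ind fun b => ?_
    show mk _ ⊔ (mk _ ⊔ mk _) = mk _ ⊔ mk _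
    exact sound fun G _ φ hφ => by
      simp [evalT, sup_comm, sup_assoc, sup_left_comm]
  sup_le := by
    refine ind fun a => ind fun b => ind fun c => ?_
    intro hac hbc
    have h1 := exact hac
    have h2 := exact hbc
    show (mk a ⊔ mk b) ⊔ mk c = mk c
    refine sound fun G _ φ hφ => ?_
    have e1 : evalT φ a ⊔ evalT φ c = evalT φ c := h1 G φ hφ
    have e2 : evalT φ b ⊔ evalT φ c = evalT φ c := h2 G φ hφ
    show (evalT φ a ⊔ evalT φ b) ⊔ evalT φ c = evalT φ c
    rw [sup_assoc, e2, e1]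
  inf_le_left := by
    refine ind fun a => ind fun b => ?_
    refine sound fun G _ φ hφ => ?_
    show evalT φ (((a.smul (-1)).sup (b.smul (-1))).smul (-1)) ⊔ evalT φ a = evalT φ a
    simp only [evalT, g_neg_smul_sup]
    exact sup_eq_right.mpr inf_le_left
  inf_le_right := by
    refine ind fun a => ind fun b => ?_
    refine sound fun G _ φ hφ => ?_
    show evalT φ (((a.smul (-1)).sup (b.smul (-1))).smul (-1)) ⊔ evalT φ b = evalT φ b
    simp only [evalT, g_neg_smul_sup]
    exact sup_eq_right.mpr inf_le_right
  le_inf := by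
    refine ind fun a => ind fun b => ind fun c => ?_
    intro hab hac
    have h1 := exact hab
    have h2 := exact hac
    refine sound fun G _ φ hφ => ?_
    show evalT φ a ⊔ evalT φ (((b.smul (-1)).sup (c.smul (-1))).smul (-1))
        = evalT φ (((b.smul (-1)).sup (c.smul (-1))).smul (-1))
    simp only [evalT, g_neg_smul_sup]
    exact sup_eq_right.mpr (le_inf (sup_eq_right.mp (h1 G φ hφ))
      (sup_eq_right.mp (h2 G φ hφ)))

instance : VectorLattice (FVL C) where
  add_le_add_left' := by
    refine ind fun a => ind fun b => ?_
    intro h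
    refine ind fun c => ?_
    have h1 := exact (show (mk a ⊔ mk b : FVL C) = mk b from h)
    refine sound fun G _ φ hφ => ?_
    show (evalT φ c + evalT φ a) ⊔ (evalT φ c + evalT φ b) = evalT φ c + evalT φ b
    exact sup_eq_right.mpr (add_le_add_right (sup_eq_right.mp (h1 G φ hφ)) _)
  smul_nonneg' := by
    intro r
    refine ind fun a => ?_
    intro hr ha
    have h1 := exact (show (mk (FreeTerm.of 0) ⊔ mk a : FVL C) = mk a from ha)
    refine sound fun G _ φ hφ => ?_
    show evalT φ ((FreeTerm.of 0).sup (a.smul r)) = evalT φ (a.smul r)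
    simp only [evalT, map_zero, smul_zero]
    refine sup_eq_right.mpr (VectorLattice.smul_nonneg' r _ hr ?_)
    have := h1 G φ hφ
    simp only [evalT, map_zero] at this
    exact sup_eq_right.mp this

/-- The canonical map. -/
def jmap : V →ₗ[ℝ] FVL C where
  toFun v := mk (FreeTerm.of v)
  map_add' v w := sound fun G _ φ hφ => by simp [evalT]
  map_smul' r v := sound fun G _ φ hφ => by simp [evalT]

lemma eval_lift {G : Type} [VectorLattice G] (φ : V →ₗ[ℝ] G)
    (hφ : ∀ v ∈ C, 0 ≤ φ v) :
    ∃ ψ : FVL C →ₗ[ℝ] G, (∀ a b : FVL C, ψ (a ⊔ b) = ψ a ⊔ ψ b) ∧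
      (∀ v : V, ψ (jmap v) = φ v) ∧ ∀ t : FreeTerm V, ψ (mk t) = evalT φ t := by
  refine ⟨{ toFun := Quotient.lift (evalT φ) (fun t s h => h G φ hφ)
            map_add' := ?_
            map_smul' := ?_ }, ?_, ?_, ?_⟩
  · refine ind fun a => ind fun b => ?_; rfl
  · intro r; refine ind fun a => ?_; rfl
  · refine ind fun a => ind fun b => ?_; rfl
  · intro v; rfl
  · intro t; rfl

end FVLConstruction

open FVLConstruction in
/-- Every pre-ordered real vector space admits a free vector lattice over it, generated
by the image of the canonical positive linear map. -/
theorem exists_free_vector_lattice (V : Type) [AddCommGroup V] [Module ℝ V]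
    (C : Set V) (hC : IsWedge C) :
    Nonempty (FreeVectorLatticeWitness V C) := by
  refine ⟨{ F := FVL C
            j := jmap
            j_pos := ?_
            universal := ?_
            generated := ?_ }⟩
  · intro v hv
    show (0 : FVL C) ⊔ jmap v = jmap v
    refine sound fun G _ φ hφ => ?_
    show evalT φ ((FreeTerm.of 0).sup (FreeTerm.of v)) = evalT φ (FreeTerm.of v)
    simp only [evalT, map_zero]
    exact sup_eq_right.mpr (hφ v hv)
  · intro G _ φ hφ
    obtain ⟨ψ, hsup, hj, heval⟩ := eval_lift φ hφ
    refine ⟨ψ, ⟨hsup, hj⟩, ?_⟩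
    rintro ψ' ⟨hsup', hj'⟩
    refine LinearMap.ext (ind fun t => ?_)
    induction t with
    | of v => exact (hj' v).trans ((hj v).symm)
    | add t s iht ihs =>
        rw [← mk_add, map_add, map_add, iht, ihs]
    | smul r t iht =>
        rw [← mk_smul, map_smul, map_smul, iht]
    | sup t s iht ihs =>
        rw [← mk_sup, hsup]; exact (hsup' (mk t) (mk s)).trans (by rw [iht, ihs])
  · intro S hj hadd hsmul hsupS hinfS
    refine ind fun t => ?_
    induction t with
    | of v => exact hj v
    | add t s iht ihs => rw [← mk_add]; exact hadd _ iht _ ihs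
    | smul r t iht => rw [← mk_smul]; exact hsmul r _ iht
    | sup t s iht ihs => rw [← mk_sup]; exact hsupS _ iht _ ihs
end

section
/- Let (X, X⁺) be a pre-ordered Banach space in which X⁺ is a closed cone (a closed wedge with X⁺ ∩ (−X⁺) = {0}), and let (j, F) be a free Banach lattice over (X, X⁺). Then j is bipositive: for x ∈ X, j(x) ≥ 0 in F if and only if x ∈ X⁺. -/
/-- The positive part of the dual unit ball of the pre-ordered Banach space `(X, C)`:
continuous linear functionals of norm at most 1 that are nonnegative on `C`. -/
def PosDualBall {X : Type} [NormedAddCommGroup X] [NormedSpace ℝ X] (C : Set X)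
    (f : X →L[ℝ] ℝ) : Prop :=
  ‖f‖ ≤ 1 ∧ ∀ x ∈ C, 0 ≤ f x

/-- `(j, F)` is a free Banach lattice over the pre-ordered Banach space `(X, C)`:
`j` is a positive contraction, and every positive contraction from `X` into a Banach
lattice factors uniquely through `j` via a contractive vector lattice homomorphism. -/
def IsFreeBanachLattice (X : Type) [NormedAddCommGroup X] [NormedSpace ℝ X]
    [CompleteSpace X] (C : Set X)
    (F : Type) [NormedAddCommGroup F] [Lattice F] [IsOrderedAddMonoid F] [HasSolidNorm F] [NormedSpace ℝ F] [CompleteSpace F]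
    (j : X →L[ℝ] F) : Prop :=
  ‖j‖ ≤ 1 ∧ (∀ x ∈ C, 0 ≤ j x) ∧
  ∀ (G : Type) [NormedAddCommGroup G] [Lattice G] [IsOrderedAddMonoid G] [HasSolidNorm G] [NormedSpace ℝ G] [CompleteSpace G],
    ∀ φ : X →L[ℝ] G, ‖φ‖ ≤ 1 → (∀ x ∈ C, 0 ≤ φ x) →
      ∃! ψ : F →L[ℝ] G, ‖ψ‖ ≤ 1 ∧ (∀ a b : F, ψ (a ⊔ b) = ψ a ⊔ ψ b) ∧
        ∀ x : X, ψ (j x) = φ x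

/-- If `X⁺` is a closed cone in the Banach space `X` and `(j, F)` is a free Banach lattice
over `(X, X⁺)`, then `j` is bipositive. -/
theorem free_banach_lattice_bipositive
    (X : Type) [NormedAddCommGroup X] [NormedSpace ℝ X] [CompleteSpace X]
    (C : Set X) (hC : IsWedge C) (hclosed : IsClosed C) (hcone : C ∩ (-C) = {0})
    (F : Type) [NormedAddCommGroup F] [Lattice F] [IsOrderedAddMonoid F] [HasSolidNorm F] [NormedSpace ℝ F] [CompleteSpace F]
    (j : X →L[ℝ] F) (hfree : IsFreeBanachLattice X C F j) :
    ∀ x : X, 0 ≤ j x ↔ x ∈ C := by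
  intro x
  refine ⟨fun hjx => ?_, fun hx => hfree.2.1 x hx⟩
  by_contra hxC
  -- convexity of C
  have hconv : Convex ℝ C := by
    intro y hy z hz a b ha hb _
    exact hC.2 a b y z ha hb hy hz
  -- separate x from C
  obtain ⟨f, u, hfx, hfC⟩ := geometric_hahn_banach_point_closed hconv hclosed hxC
  have hu0 : u < 0 := by simpa using hfC 0 hC.1
  -- f is nonneg on C
  have hfpos : ∀ y ∈ C, 0 ≤ f y := by
    intro y hy
    by_contra hneg
    push_neg at hneg
    obtain ⟨t, ht0, htu⟩ : ∃ t : ℝ, 0 ≤ t ∧ t * f y < u := by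
      refine ⟨(u - 1) / f y, ?_, ?_⟩
      · rw [div_eq_mul_inv]
        have h1 : u - 1 ≤ 0 := by linarith
        have h2 : (f y)⁻¹ ≤ 0 := inv_nonpos.mpr hneg.le
        nlinarith
      · rw [div_mul_cancel₀ _ (ne_of_lt hneg)]; linarith
    have : t • y ∈ C := by
      have := hC.2 t 0 y y ht0 le_rfl hy hy
      simpa using this
    have := hfC _ this
    rw [map_smul] at this
    simp only [smul_eq_mul] at this
    linarith
  have hfne : ‖f‖ ≠ 0 := by
    intro h
    have : f = 0 := by simpa [norm_eq_zero] using h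
    rw [this] at hfx
    simp at hfx
    linarith
  have hfnorm : (0:ℝ) < ‖f‖ := lt_of_le_of_ne (norm_nonneg f) (Ne.symm hfne)
  set g : X →L[ℝ] ℝ := ‖f‖⁻¹ • f with hg
  have hgnorm : ‖g‖ ≤ 1 := by
    apply ContinuousLinearMap.opNorm_le_bound _ zero_le_one
    intro y
    simp only [hg, ContinuousLinearMap.smul_apply, smul_eq_mul, one_mul]
    rw [Real.norm_eq_abs, abs_mul, abs_inv, abs_norm]
    calc ‖f‖⁻¹ * |f y| ≤ ‖f‖⁻¹ * (‖f‖ * ‖y‖) := by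
          exact mul_le_mul_of_nonneg_left (f.le_opNorm y) (inv_nonneg.mpr (norm_nonneg f))
      _ = ‖y‖ := by field_simp
  have hgpos : ∀ y ∈ C, 0 ≤ g y := by
    intro y hy
    simp only [hg, ContinuousLinearMap.smul_apply, smul_eq_mul]
    exact mul_nonneg (inv_nonneg.mpr (norm_nonneg f)) (hfpos y hy)
  have hgx : g x < 0 := by
    simp only [hg, ContinuousLinearMap.smul_apply, smul_eq_mul]
    exact mul_neg_of_pos_of_neg (inv_pos.mpr hfnorm) (by linarith)
  obtain ⟨ψ, ⟨_, hψsup, hψj⟩, _⟩ := hfree.2.2 ℝ g hgnorm hgpos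
  -- ψ is positive
  have hψpos : 0 ≤ ψ (j x) := by
    have h1 : j x ⊔ 0 = j x := sup_eq_left.mpr hjx
    have := hψsup (j x) 0
    rw [h1, map_zero] at this
    rw [this]
    exact le_sup_right
  rw [hψj x] at hψpos
  linarith
end

section
/- Let (X, X⁺) be a pre-ordered Banach space and let (j, F) be a free Banach lattice over (X, X⁺). Then the following are equivalent: (a) F ≠ {0}; (b) there exists a nonzero x* ∈ Bₓ*⁺; (c) the operator norm of j equals 1. If moreover X⁺ is a closed cone, these are also equivalent to X ≠ {0}. -/
/-- In a normed lattice group that is a real normed space, nonnegative scalar multiples of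
nonnegative elements are nonnegative (derived from closedness of the cone and the
2-semiclosedness of lattice-ordered groups). -/
lemma FBL.aux_smul_nonneg {G : Type} [NormedAddCommGroup G] [Lattice G] [IsOrderedAddMonoid G] [HasSolidNorm G] [NormedSpace ℝ G]
    {c : ℝ} (hc : 0 ≤ c) {x : G} (hx : 0 ≤ x) : 0 ≤ c • x := by
  have hS : IsClosed {t : ℝ | 0 ≤ t • x} := by
    have : Continuous fun t : ℝ => t • x := continuous_id.smul continuous_const
    exact isClosed_nonneg.preimage this
  have half : ∀ t : ℝ, 0 ≤ t • x → 0 ≤ (t / 2) • x := by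
    intro t ht
    refine nsmul_two_semiclosed ?_
    rw [two_nsmul, ← add_smul]
    have : t / 2 + t / 2 = t := by ring
    rwa [this]
  have hnat : ∀ m : ℕ, 0 ≤ (m : ℝ) • x := by
    intro m
    induction m with
    | zero => simp
    | succ n ih =>
      push_cast
      rw [add_smul, one_smul]
      exact add_nonneg ih hx
  have hdy : ∀ k m : ℕ, 0 ≤ ((m : ℝ) / 2 ^ k) • x := by
    intro k
    induction k with
    | zero => simpa using hnat
    | succ k ih =>
      intro m
      have h := half _ (ih m)
      rwa [div_div, ← pow_succ] at h
  have tend : Filter.Tendsto (fun n : ℕ => ((⌊c * 2 ^ n⌋₊ : ℝ) / 2 ^ n))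
      Filter.atTop (nhds c) := by
    have h1 := tendsto_nat_floor_mul_div_atTop (R := ℝ) hc
    have h2 : Filter.Tendsto (fun n : ℕ => ((2 : ℝ) ^ n)) Filter.atTop Filter.atTop :=
      tendsto_pow_atTop_atTop_of_one_lt one_lt_two
    exact h1.comp h2
  have : c ∈ {t : ℝ | 0 ≤ t • x} :=
    hS.mem_of_tendsto tend (Filter.Eventually.of_forall fun n => hdy n _)
  exact this

/-- Separation of a point from a closed convex cone by a positive functional. -/
lemma FBL.sep_cone {G : Type} [NormedAddCommGroup G] [NormedSpace ℝ G] {s : Set G}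
    (hconv : Convex ℝ s) (hcl : IsClosed s) (h0 : (0 : G) ∈ s)
    (hsmul : ∀ a : ℝ, 0 ≤ a → ∀ y ∈ s, a • y ∈ s) {p : G} (hp : p ∉ s) :
    ∃ φ : G →L[ℝ] ℝ, (∀ y ∈ s, 0 ≤ φ y) ∧ φ p < 0 := by
  obtain ⟨φ, u, hpu, hsep⟩ := geometric_hahn_banach_point_closed hconv hcl hp
  have hu0 : u < 0 := by simpa using hsep 0 h0
  refine ⟨φ, ?_, hpu.trans hu0⟩
  intro y hy
  by_contra h
  have hneg : φ y < 0 := lt_of_not_ge h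
  obtain ⟨n, hn⟩ := exists_nat_gt (u / φ y)
  have hyn := hsep ((n : ℝ) • y) (hsmul _ (by positivity) y hy)
  rw [map_smul, smul_eq_mul] at hyn
  have : (n : ℝ) * φ y < u := (div_lt_iff_of_neg hneg).mp hn
  linarith

/-- Normalizing a nonzero positive functional into the positive dual ball. -/
lemma FBL.normalize {X : Type} [NormedAddCommGroup X] [NormedSpace ℝ X] (C : Set X)
    {φ : X →L[ℝ] ℝ} (hpos : ∀ x ∈ C, 0 ≤ φ x) {p : X} (hpt : φ p ≠ 0) :
    ∃ g : X →L[ℝ] ℝ, PosDualBall C g ∧ g ≠ 0 := by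
  have hφ : φ ≠ 0 := fun h => hpt (by rw [h]; rfl)
  have hn : ‖φ‖ ≠ 0 := by simpa using hφ
  refine ⟨‖φ‖⁻¹ • φ, ⟨?_, ?_⟩, ?_⟩
  · have h := norm_smul (‖φ‖⁻¹) φ
    rw [h, norm_inv, norm_norm, inv_mul_cancel₀ hn]
  · intro x hx
    simp only [ContinuousLinearMap.smul_apply, smul_eq_mul]
    exact mul_nonneg (inv_nonneg.mpr (norm_nonneg _)) (hpos x hx)
  · intro h0
    have h1 : (‖φ‖⁻¹ • φ) p = 0 := by rw [h0]; rfl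
    rw [ContinuousLinearMap.smul_apply, smul_eq_mul] at h1
    exact mul_ne_zero (inv_ne_zero hn) hpt h1

/-- For a free Banach lattice `(j, F)` over a pre-ordered Banach space `(X, X⁺)`, the
following are equivalent: `F` is nonzero; the positive part of the dual unit ball of `X`
is nontrivial; `‖j‖ = 1`. If moreover `X⁺` is a closed cone, these are equivalent to
`X` being nonzero. -/
theorem free_banach_lattice_nontrivial_tfae
    (X : Type) [NormedAddCommGroup X] [NormedSpace ℝ X] [CompleteSpace X]
    (C : Set X) (hC : IsWedge C)
    (F : Type) [NormedAddCommGroup F] [Lattice F] [IsOrderedAddMonoid F] [HasSolidNorm F] [NormedSpace ℝ F] [CompleteSpace F]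
    (j : X →L[ℝ] F) (hfree : IsFreeBanachLattice X C F j) :
    ((∃ f : F, f ≠ 0) ↔ ∃ g : X →L[ℝ] ℝ, PosDualBall C g ∧ g ≠ 0) ∧
    ((∃ f : F, f ≠ 0) ↔ ‖j‖ = 1) ∧
    (IsClosed C → C ∩ (-C) = {0} → ((∃ f : F, f ≠ 0) ↔ ∃ x : X, x ≠ 0)) := by
  obtain ⟨hj1, hjpos, huniv⟩ := hfree
  -- if j = 0 then F = 0
  have hFzero : j = 0 → ∀ f : F, f = 0 := by
    intro hj f
    obtain ⟨ψ, -, huniq⟩ := huniv F j hj1 hjpos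
    have hid : ContinuousLinearMap.id ℝ F = ψ :=
      huniq _ ⟨ContinuousLinearMap.norm_id_le, fun a b => rfl, fun x => rfl⟩
    have hzero : (0 : F →L[ℝ] F) = ψ := by
      refine huniq _ ⟨by simp, fun a b => by simp, fun x => by simp [hj]⟩
    have : ContinuousLinearMap.id ℝ F = (0 : F →L[ℝ] F) := hid.trans hzero.symm
    calc f = ContinuousLinearMap.id ℝ F f := rfl
    _ = (0 : F →L[ℝ] F) f := by rw [this]
    _ = 0 := rfl
  -- (a) → (b)
  have hab : (∃ f : F, f ≠ 0) → ∃ g : X →L[ℝ] ℝ, PosDualBall C g ∧ g ≠ 0 := by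
    rintro ⟨f, hf⟩
    have hjne : j ≠ 0 := fun hj => hf (hFzero hj f)
    obtain ⟨x₀, hx₀⟩ : ∃ x : X, j x ≠ 0 := by
      by_contra h
      push_neg at h
      exact hjne (by ext x; simpa using h x)
    -- separate in F
    have hconv : Convex ℝ {y : F | 0 ≤ y} := by
      intro y hy z hz a b ha hb _
      exact add_nonneg (FBL.aux_smul_nonneg ha hy) (FBL.aux_smul_nonneg hb hz)
    have hsmul : ∀ a : ℝ, 0 ≤ a → ∀ y ∈ {y : F | 0 ≤ y}, a • y ∈ {y : F | 0 ≤ y} :=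
      fun a ha y hy => FBL.aux_smul_nonneg ha hy
    obtain ⟨p, hp, hcase⟩ : ∃ p : F, p ∉ {y : F | 0 ≤ y} ∧ (p = j x₀ ∨ p = -(j x₀)) := by
      by_cases hg : 0 ≤ j x₀
      · refine ⟨-(j x₀), ?_, Or.inr rfl⟩
        intro hmem
        exact hx₀ (le_antisymm (by simpa using (hmem : 0 ≤ -(j x₀))) hg)
      · exact ⟨j x₀, hg, Or.inl rfl⟩
    obtain ⟨φ, hφpos, hφp⟩ :=
      FBL.sep_cone hconv isClosed_nonneg le_rfl hsmul hp
    have hφj : φ (j x₀) ≠ 0 := by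
      rcases hcase with h | h
      · rw [h] at hφp; exact ne_of_lt hφp
      · rw [h, map_neg] at hφp
        intro h0; rw [h0] at hφp; simp at hφp
    refine FBL.normalize C (φ := φ.comp j) (p := x₀) ?_ ?_
    · intro x hx
      exact hφpos _ (hjpos x hx)
    · simpa using hφj
  -- (b) → (c)
  have hbc : (∃ g : X →L[ℝ] ℝ, PosDualBall C g ∧ g ≠ 0) → ‖j‖ = 1 := by
    rintro ⟨g, ⟨hg1, hg2⟩, hg0⟩
    have hgn : ‖g‖ ≠ 0 := by simpa using hg0
    set φ : X →L[ℝ] ℝ := ‖g‖⁻¹ • g with hφdef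
    have hφnorm : ‖φ‖ = 1 := by
      have h := norm_smul (‖g‖⁻¹) g
      rw [hφdef, h, norm_inv, norm_norm, inv_mul_cancel₀ hgn]
    have hφpos : ∀ x ∈ C, 0 ≤ φ x := by
      intro x hx
      simp only [hφdef, ContinuousLinearMap.smul_apply, smul_eq_mul]
      exact mul_nonneg (inv_nonneg.mpr (norm_nonneg _)) (hg2 x hx)
    obtain ⟨ψ, ⟨hψn, -, hψj⟩, -⟩ := huniv ℝ φ (le_of_eq hφnorm) hφpos
    have hcomp : φ = ψ.comp j := by
      ext x; exact (hψj x).symm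
    have h1 : (1 : ℝ) ≤ ‖j‖ := by
      have := (ContinuousLinearMap.opNorm_comp_le ψ j)
      rw [← hcomp, hφnorm] at this
      nlinarith [norm_nonneg j]
    exact le_antisymm hj1 h1
  -- (c) → (a)
  have hca : ‖j‖ = 1 → ∃ f : F, f ≠ 0 := by
    intro hn
    by_contra h
    push_neg at h
    have : j = 0 := by ext x; exact h (j x)
    rw [this] at hn
    simp at hn
  refine ⟨⟨hab, fun hb => hca (hbc hb)⟩, ⟨fun ha => hbc (hab ha), hca⟩, ?_⟩
  intro hCcl hCcone
  constructor
  · rintro ⟨f, hf⟩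
    have hjne : j ≠ 0 := fun hj => hf (hFzero hj f)
    obtain ⟨x₀, hx₀⟩ : ∃ x : X, j x ≠ 0 := by
      by_contra h
      push_neg at h
      exact hjne (by ext x; simpa using h x)
    exact ⟨x₀, fun h => hx₀ (by rw [h]; simp)⟩
  · rintro ⟨x, hx⟩
    -- build a nonzero element of the positive dual ball from a closed proper cone
    have hconv : Convex ℝ C := by
      intro y hy z hz a b ha hb _
      exact hC.2 a b y z ha hb hy hz
    have hsmul : ∀ a : ℝ, 0 ≤ a → ∀ y ∈ C, a • y ∈ C := by
      intro a ha y hy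
      have := hC.2 a 0 y y ha le_rfl hy hy
      simpa using this
    obtain ⟨p, hp⟩ : ∃ p : X, p ∉ C := by
      by_cases hxc : x ∈ C
      · refine ⟨-x, fun hmem => ?_⟩
        have : x ∈ C ∩ (-C) := ⟨hxc, by simpa [Set.mem_neg] using hmem⟩
        rw [hCcone] at this
        exact hx this
      · exact ⟨x, hxc⟩
    obtain ⟨φ, hφpos, hφp⟩ := FBL.sep_cone hconv hCcl hC.1 hsmul hp
    obtain ⟨g, hg, hg0⟩ := FBL.normalize C hφpos (ne_of_lt hφp)
    exact hca (hbc ⟨g, hg, hg0⟩)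
end

section
/- Let (X, X⁺) be a pre-ordered Banach space and let (j, F) be a free Banach lattice over (X, X⁺). For x ∈ X, j(x) = 0 if and only if x*(x) = 0 for all x* ∈ Bₓ*⁺. Consequently, j is injective if and only if Bₓ*⁺ separates the points of X. -/
section AuxSeparation

set_option linter.unusedSectionVars false

variable {E : Type} [NormedAddCommGroup E] [Lattice E] [IsOrderedAddMonoid E] [HasSolidNorm E] [NormedSpace ℝ E]

private lemma aux_pow2_nsmul_nonneg {a : E} : ∀ k : ℕ, 0 ≤ (2 ^ k) • a → 0 ≤ a
  | 0, h => by simpa using h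
  | k + 1, h => by
    apply aux_pow2_nsmul_nonneg k
    apply nsmul_two_semiclosed
    rwa [← mul_smul, ← pow_succ']

private lemma aux_smul_nonneg {t : ℝ} (ht : 0 ≤ t) {v : E} (hv : 0 ≤ v) : 0 ≤ t • v := by
  have hd : ∀ n : ℕ, 0 ≤ ((⌊t * (2:ℝ) ^ n⌋₊ : ℝ) / (2:ℝ) ^ n) • v := by
    intro n
    apply aux_pow2_nsmul_nonneg (a := ((⌊t * (2:ℝ) ^ n⌋₊ : ℝ) / (2:ℝ) ^ n) • v) n
    have h2 : ((2:ℝ) ^ n) ≠ 0 := by positivity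
    have hcalc : (2 ^ n : ℕ) • (((⌊t * (2:ℝ) ^ n⌋₊ : ℝ) / (2:ℝ) ^ n) • v)
        = (⌊t * (2:ℝ) ^ n⌋₊ : ℕ) • v := by
      rw [← Nat.cast_smul_eq_nsmul ℝ (2 ^ n), ← Nat.cast_smul_eq_nsmul ℝ (⌊t * (2:ℝ) ^ n⌋₊),
        smul_smul]
      push_cast
      rw [mul_div_cancel₀ _ h2]
    rw [hcalc]
    exact nsmul_nonneg hv _
  have htend : Filter.Tendsto (fun n : ℕ => ((⌊t * (2:ℝ) ^ n⌋₊ : ℝ) / (2:ℝ) ^ n) • v)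
      Filter.atTop (nhds (t • v)) := by
    apply Filter.Tendsto.smul_const
    exact (tendsto_nat_floor_mul_div_atTop ht).comp
      (tendsto_pow_atTop_atTop_of_one_lt one_lt_two)
  exact ge_of_tendsto' htend hd

private lemma aux_exists_pos_functional [CompleteSpace E] {a : E} (ha : ¬ 0 ≤ a) :
    ∃ f : E →L[ℝ] ℝ, ‖f‖ ≤ 1 ∧ (∀ y : E, 0 ≤ y → 0 ≤ f y) ∧ f a < 0 := by
  have hPconv : Convex ℝ {y : E | 0 ≤ y} := by
    intro x hx y hy s t hs ht _
    exact add_nonneg (aux_smul_nonneg hs hx) (aux_smul_nonneg ht hy)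
  have hPclosed : IsClosed {y : E | 0 ≤ y} := isClosed_le continuous_const continuous_id
  obtain ⟨f, u, hfP, hfa⟩ := geometric_hahn_banach_closed_point hPconv hPclosed ha
  clear ha
  have hu : 0 < u := by
    have := hfP 0 le_rfl
    simpa using this
  have hfy : ∀ y : E, 0 ≤ y → f y ≤ 0 := by
    intro y hy
    by_contra h
    push_neg at h
    have hty : ((u + 1) / f y) • y ∈ {y : E | 0 ≤ y} := aux_smul_nonneg (by positivity) hy
    have := hfP _ hty
    rw [map_smul, smul_eq_mul, div_mul_cancel₀ _ (ne_of_gt h)] at this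
    linarith
  have hfne : ‖f‖ ≠ 0 := by
    intro h
    rw [norm_eq_zero] at h
    subst h
    simp only [ContinuousLinearMap.zero_apply] at hfa
    linarith
  have hfapos : 0 < f a := lt_trans hu hfa
  have hinv : 0 < ‖f‖⁻¹ := by
    rcases (norm_nonneg f).lt_or_eq with h | h
    · exact inv_pos.2 h
    · exact absurd h.symm hfne
  refine ⟨(-‖f‖⁻¹) • f, ?_, ?_, ?_⟩
  · refine le_trans (ContinuousLinearMap.opNorm_smul_le _ _) ?_
    rw [norm_neg, norm_inv, norm_norm, inv_mul_cancel₀ hfne]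
  · intro y hy
    have := hfy y hy
    simp only [ContinuousLinearMap.coe_smul', Pi.smul_apply, smul_eq_mul, neg_mul]
    nlinarith
  · simp only [ContinuousLinearMap.coe_smul', Pi.smul_apply, smul_eq_mul, neg_mul]
    nlinarith

private lemma aux_pos_dual_separates [CompleteSpace E] {a : E} (ha : a ≠ 0) :
    ∃ f : E →L[ℝ] ℝ, ‖f‖ ≤ 1 ∧ (∀ y : E, 0 ≤ y → 0 ≤ f y) ∧ f a ≠ 0 := by
  by_cases h1 : 0 ≤ a
  · have h2 : ¬ 0 ≤ -a := by
      intro h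
      exact ha (le_antisymm (by simpa using neg_nonneg.1 h) h1)
    obtain ⟨f, hf1, hf2, hf3⟩ := aux_exists_pos_functional h2
    refine ⟨f, hf1, hf2, ?_⟩
    rw [map_neg] at hf3
    intro h
    rw [h] at hf3
    simp at hf3
  · obtain ⟨f, hf1, hf2, hf3⟩ := aux_exists_pos_functional h1
    exact ⟨f, hf1, hf2, ne_of_lt hf3⟩

end AuxSeparation

/-- For a free Banach lattice `(j, F)` over a pre-ordered Banach space `(X, X⁺)`:
`j x = 0` if and only if all elements of the positive part of the dual unit ball vanish
at `x`; consequently `j` is injective if and only if the positive part of the dual unit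
ball separates the points of `X`. -/
theorem free_banach_lattice_kernel_characterisation
    (X : Type) [NormedAddCommGroup X] [NormedSpace ℝ X] [CompleteSpace X]
    (C : Set X) (hC : IsWedge C)
    (F : Type) [NormedAddCommGroup F] [Lattice F] [IsOrderedAddMonoid F] [HasSolidNorm F] [NormedSpace ℝ F] [CompleteSpace F]
    (j : X →L[ℝ] F) (hfree : IsFreeBanachLattice X C F j) :
    (∀ x : X, j x = 0 ↔ ∀ g : X →L[ℝ] ℝ, PosDualBall C g → g x = 0) ∧
    (Function.Injective j ↔
      ∀ x y : X, x ≠ y → ∃ g : X →L[ℝ] ℝ, PosDualBall C g ∧ g x ≠ g y) := by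
  obtain ⟨hjnorm, hjpos, huniv⟩ := hfree
  have part1 : ∀ x : X, j x = 0 ↔ ∀ g : X →L[ℝ] ℝ, PosDualBall C g → g x = 0 := by
    intro x
    constructor
    · intro hjx g hg
      obtain ⟨ψ, ⟨hψn, hψl, hψj⟩, -⟩ := huniv ℝ g hg.1 hg.2
      have := hψj x
      rw [hjx, map_zero] at this
      exact this.symm
    · intro hall
      by_contra hne
      obtain ⟨f, hf1, hf2, hf3⟩ := aux_pos_dual_separates hne
      have hgball : PosDualBall C (f.comp j) := by
        refine ⟨?_, ?_⟩
        · calc ‖f.comp j‖ ≤ ‖f‖ * ‖j‖ := ContinuousLinearMap.opNorm_comp_le f j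
            _ ≤ 1 := mul_le_one₀ hf1 (norm_nonneg j) hjnorm
        · intro y hy
          exact hf2 _ (hjpos y hy)
      exact hf3 (hall _ hgball)
  refine ⟨part1, ?_, ?_⟩
  · intro hinj x y hxy
    have hjxy : j (x - y) ≠ 0 := by
      rw [map_sub, sub_ne_zero]
      exact fun h => hxy (hinj h)
    have hex := (not_iff_not.2 (part1 (x - y))).1 hjxy
    push_neg at hex
    obtain ⟨g, hg1, hg2⟩ := hex
    refine ⟨g, hg1, ?_⟩
    rw [map_sub] at hg2
    exact fun h => hg2 (by rw [h, sub_self])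
  · intro hsep a b hab
    by_contra hne
    obtain ⟨g, hg1, hg2⟩ := hsep a b hne
    have hz : j (a - b) = 0 := by rw [map_sub, hab, sub_self]
    have := (part1 (a - b)).1 hz g hg1
    rw [map_sub, sub_eq_zero] at this
    exact hg2 this
end

section
/- Let (X, X⁺) be a pre-ordered Banach space and let (j, F) be a free Banach lattice over (X, X⁺). Then for every x ∈ X⁺, ‖j(x)‖ = max_{x* ∈ Bₓ*⁺} x*(x): one has x*(x) ≤ ‖j(x)‖ for every x* ∈ Bₓ*⁺, and there exists x* ∈ Bₓ*⁺ with x*(x) = ‖j(x)‖. -/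
open Pointwise


/-- For a free Banach lattice `(j, F)` over a pre-ordered Banach space `(X, X⁺)` and
`x ∈ X⁺`, the norm `‖j x‖` equals the maximum of `x* x` over the positive part of the
dual unit ball of `X`. -/
theorem free_banach_lattice_norm_of_positive
    (X : Type) [NormedAddCommGroup X] [NormedSpace ℝ X] [CompleteSpace X]
    (C : Set X) (hC : IsWedge C)
    (F : Type) [NormedAddCommGroup F] [Lattice F] [IsOrderedAddMonoid F] [HasSolidNorm F] [NormedSpace ℝ F] [CompleteSpace F]
    (j : X →L[ℝ] F) (hfree : IsFreeBanachLattice X C F j) :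
    ∀ x ∈ C, (∀ g : X →L[ℝ] ℝ, PosDualBall C g → g x ≤ ‖j x‖) ∧
      ∃ g : X →L[ℝ] ℝ, PosDualBall C g ∧ g x = ‖j x‖ := by
  intro x hx
  -- Part 1
  have part1 : ∀ g : X →L[ℝ] ℝ, PosDualBall C g → g x ≤ ‖j x‖ := by
    intro g hg
    obtain ⟨ψ, ⟨hψ1, _, hψ3⟩, _⟩ := hfree.2.2 ℝ g hg.1 hg.2
    calc g x = ψ (j x) := (hψ3 x).symm
      _ ≤ ‖ψ (j x)‖ := le_abs_self _
      _ ≤ ‖ψ‖ * ‖j x‖ := ψ.le_opNorm _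
      _ ≤ 1 * ‖j x‖ := by
          exact mul_le_mul_of_nonneg_right hψ1 (norm_nonneg _)
      _ = ‖j x‖ := one_mul _
  refine ⟨part1, ?_⟩
  set r : ℝ := ‖j x‖ with hr
  -- key : r ≤ ‖x + c‖ for every c ∈ C
  have hkey : ∀ c ∈ C, r ≤ ‖x + c‖ := by
    intro c hc
    have h1 : (0:F) ≤ j x := hfree.2.1 x hx
    have h2 : (0:F) ≤ j c := hfree.2.1 c hc
    have h3 : j x ≤ j (x + c) := by
      rw [map_add]; exact le_add_of_nonneg_right h2
    have h4 : ‖j x‖ ≤ ‖j (x + c)‖ := by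
      apply norm_le_norm_of_abs_le_abs
      rw [abs_of_nonneg h1, abs_of_nonneg (h1.trans h3)]
      exact h3
    calc r = ‖j x‖ := hr
      _ ≤ ‖j (x + c)‖ := h4
      _ ≤ ‖j‖ * ‖x + c‖ := j.le_opNorm _
      _ ≤ 1 * ‖x + c‖ := mul_le_mul_of_nonneg_right hfree.1 (norm_nonneg _)
      _ = ‖x + c‖ := one_mul _
  rcases eq_or_lt_of_le (norm_nonneg (j x)) with h0 | hrpos
  · exact ⟨0, ⟨by simp, by intro y _; simp⟩, by simpa using h0⟩
  -- r > 0 case: separate x from S = ball 0 r + (-C)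
  set S : Set X := Metric.ball (0:X) r + (-C) with hS
  have hSconv : Convex ℝ S := by
    apply Convex.add (convex_ball 0 r)
    apply Convex.neg
    intro a ha b hb s t hs ht hst
    exact hC.2 s t a b hs ht ha hb
  have hSopen : IsOpen S := Metric.isOpen_ball.add_right
  have hxS : x ∉ S := by
    rintro ⟨b, hb, nc, hnc, hbc⟩
    obtain ⟨c, hc, rfl⟩ : ∃ c ∈ C, -c = nc := ⟨-nc, hnc, by simp⟩
    have hxc : x + c = b := by rw [← hbc]; module
    have h1 := hkey c hc
    rw [hxc] at h1
    have hblt : ‖b‖ < r := by simpa using hb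
    linarith
  obtain ⟨f, hf⟩ := geometric_hahn_banach_open_point hSconv hSopen hxS
  set K : ℝ := f x with hK
  have hball : ∀ b : X, ‖b‖ < r → f b < K := by
    intro b hb
    have : b ∈ S := ⟨b, by simpa using hb, 0, by simpa using hC.1, by simp⟩
    exact hf b this
  have hKpos : 0 < K := by
    have := hball 0 (by simp only [norm_zero]; exact hrpos)
    simpa using this
  -- positivity of f on C
  have hfC : ∀ c ∈ C, 0 ≤ f c := by
    intro c hc
    by_contra hneg
    push_neg at hneg
    set t : ℝ := (K + 1) / (-f c) with htdef
    have ht0 : 0 ≤ t := by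
      apply div_nonneg <;> linarith
    have htc : t • c ∈ C := by
      have := hC.2 t 0 c c ht0 le_rfl hc hc
      simpa using this
    have hmem : -(t • c) ∈ S := ⟨0, Metric.mem_ball_self hrpos, -(t • c),
      Set.neg_mem_neg.mpr htc, by simp⟩
    have := hf _ hmem
    rw [map_neg, map_smul, smul_eq_mul] at this
    have heq : -(t * f c) = K + 1 := by
      rw [htdef]; field_simp [hneg.ne]
    rw [heq] at this
    linarith
  -- norm bound: r * |f b| ≤ K * ‖b‖
  have habs : ∀ b : X, r * |f b| ≤ K * ‖b‖ := by
    intro b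
    apply le_of_forall_pos_le_add
    intro ε hε
    rcases eq_or_ne (f b) 0 with hfb | hfb
    · rw [hfb]; simp; positivity
    have hbne : b ≠ 0 := by intro h; rw [h] at hfb; simp at hfb
    have hbnorm : 0 < ‖b‖ := norm_pos_iff.mpr hbne
    have hc : 0 < |f b| := abs_pos.mpr hfb
    set t : ℝ := max 0 (r - ε / |f b|) with ht
    have ht0 : 0 ≤ t := le_max_left _ _
    have htr : t < r := by
      apply max_lt hrpos
      have : 0 < ε / |f b| := div_pos hε hc
      linarith
    have hscale : ∀ s : ℝ, |s| * ‖b‖ < r → |f (s • b)| ≤ K := by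
      intro s hs
      have h1 : ‖s • b‖ < r := by rwa [norm_smul, Real.norm_eq_abs]
      have h2 : ‖-(s • b)‖ < r := by rwa [norm_neg]
      have := hball _ h1
      have := hball _ h2
      rw [map_neg] at this
      rw [abs_le]
      constructor <;> [linarith; linarith [hball _ h1]]
    have hts : |(t / ‖b‖)| * ‖b‖ < r := by
      rw [abs_of_nonneg (by positivity), div_mul_cancel₀ _ (ne_of_gt hbnorm)]
      exact htr
    have := hscale (t / ‖b‖) hts
    rw [map_smul] at this
    have h5 : t / ‖b‖ * |f b| ≤ K := by
      rw [smul_eq_mul, abs_mul, abs_of_nonneg (by positivity)] at this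
      exact this
    have h6 : t * |f b| ≤ K * ‖b‖ := by
      rw [div_mul_eq_mul_div] at h5
      calc t * |f b| = (t * |f b| / ‖b‖) * ‖b‖ := by field_simp
        _ ≤ K * ‖b‖ := mul_le_mul_of_nonneg_right h5 (le_of_lt hbnorm)
    have h7 : r - t ≤ ε / |f b| := by
      have : r - ε / |f b| ≤ t := le_max_right _ _
      linarith
    have h8 : (r - t) * |f b| ≤ ε := by
      calc (r - t) * |f b| ≤ (ε / |f b|) * |f b| :=
            mul_le_mul_of_nonneg_right h7 (le_of_lt hc)
        _ = ε := by field_simp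
    nlinarith
  -- the functional
  refine ⟨(r / K) • f, ⟨?_, ?_⟩, ?_⟩
  · apply ContinuousLinearMap.opNorm_le_bound _ zero_le_one
    intro b
    have := habs b
    rw [ContinuousLinearMap.smul_apply, smul_eq_mul, Real.norm_eq_abs, abs_mul,
      abs_of_nonneg (by positivity : (0:ℝ) ≤ r / K), one_mul]
    rw [div_mul_eq_mul_div, div_le_iff₀ hKpos]
    nlinarith
  · intro c hc
    have := hfC c hc
    rw [ContinuousLinearMap.smul_apply, smul_eq_mul]
    positivity
  · rw [ContinuousLinearMap.smul_apply, smul_eq_mul, ← hK]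
    field_simp
end

section
/- Let 1 ≤ p ≤ ∞ with conjugate exponent q (1/p + 1/q = 1), let μ be a measure, let k ≥ 1, and let g₁, …, g_k ∈ L^q(μ) satisfy gᵢ·gⱼ = 0 almost everywhere for all i ≠ j and ‖gᵢ‖_q ≤ 1 for all i. Define ψ : Lᵖ(μ) → ℓᵖ(Fin k) (ℝᵏ with the ℓᵖ-norm) by ψ(f) := (∫ g₁·f dμ, …, ∫ g_k·f dμ). Then ψ is a contraction: ‖ψ(f)‖_{ℓᵖ} ≤ ‖f‖_{Lᵖ(μ)} for all f ∈ Lᵖ(μ). If in addition every gᵢ ≥ 0 a.e., then ψ is positive: f ≥ 0 a.e. implies ψ(f) ≥ 0 coordinatewise. -/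
open scoped ENNReal

open MeasureTheory in
private lemma holder_aux {Ω : Type} [MeasurableSpace Ω] {μ : MeasureTheory.Measure Ω}
    {p q : ℝ≥0∞} (hpq : p⁻¹ + q⁻¹ = 1) {u v : Ω → ℝ}
    (hu : AEStronglyMeasurable u μ) (hv : AEStronglyMeasurable v μ) :
    eLpNorm (fun ω => u ω * v ω) 1 μ ≤ eLpNorm u q μ * eLpNorm v p μ := by
  have : ENNReal.HolderTriple q p 1 := ⟨by rw [inv_one, add_comm, hpq]⟩
  simpa using eLpNorm_le_eLpNorm_mul_eLpNorm_of_nnnorm hu hv (· * ·) 1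
    (Filter.Eventually.of_forall fun ω => by simp [nnnorm_mul])

/-- If `g₁, …, g_k ∈ L^q(μ)` are pairwise a.e. disjoint (products vanish a.e.) and of norm
at most 1, then `f ↦ (∫ g₁ ⬝ f dμ, …, ∫ g_k ⬝ f dμ)` is a contraction from `Lᵖ(μ)` to
`ℓᵖ(Fin k)`; it is positive if all `gᵢ` are a.e. nonnegative. -/
theorem disjoint_functions_yield_contraction
    (Ω : Type) [MeasurableSpace Ω] (μ : MeasureTheory.Measure Ω)
    (p q : ℝ≥0∞) [Fact (1 ≤ p)] (hpq : p⁻¹ + q⁻¹ = 1)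
    (k : ℕ) (hk : 1 ≤ k) (g : Fin k → MeasureTheory.Lp ℝ q μ)
    (hdisj : ∀ i j : Fin k, i ≠ j → ∀ᵐ ω ∂μ, g i ω * g j ω = 0)
    (hnorm : ∀ i, ‖g i‖ ≤ 1) :
    (∀ f : MeasureTheory.Lp ℝ p μ,
        ‖(WithLp.equiv p (Fin k → ℝ)).symm (fun i => ∫ ω, g i ω * f ω ∂μ)‖ ≤ ‖f‖) ∧
    ((∀ i, ∀ᵐ ω ∂μ, 0 ≤ g i ω) →
      ∀ f : MeasureTheory.Lp ℝ p μ, (∀ᵐ ω ∂μ, 0 ≤ f ω) →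
        ∀ i : Fin k, 0 ≤ ∫ ω, g i ω * f ω ∂μ) := by
  classical
  open MeasureTheory in
  have hp1 : (1 : ℝ≥0∞) ≤ p := Fact.out
  have hp0 : p ≠ 0 := by
    intro h; rw [h] at hp1; exact absurd hp1 (by simp)
  -- strongly measurable representatives of the `g i`
  set G : Fin k → Ω → ℝ := fun i => (Lp.aestronglyMeasurable (g i)).mk _ with hGdef
  have hGsm : ∀ i, StronglyMeasurable (G i) :=
    fun i => (Lp.aestronglyMeasurable (g i)).stronglyMeasurable_mk
  have hGae : ∀ i, (g i : Ω → ℝ) =ᵐ[μ] G i :=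
    fun i => (Lp.aestronglyMeasurable (g i)).ae_eq_mk
  have hGq : ∀ i, eLpNorm (G i) q μ ≤ 1 := by
    intro i
    rw [← eLpNorm_congr_ae (hGae i)]
    have h1 := hnorm i
    rw [Lp.norm_def, ← ENNReal.toReal_one] at h1
    exact (ENNReal.toReal_le_toReal (Lp.eLpNorm_ne_top (g i)) ENNReal.one_ne_top).1 h1
  -- supports
  set A : Fin k → Set Ω := fun i => {ω | G i ω ≠ 0} with hAdef
  have hAm : ∀ i, MeasurableSet (A i) :=
    fun i => ((hGsm i).measurable (measurableSet_singleton (0 : ℝ))).compl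
  constructor
  · intro f
    have hF : AEStronglyMeasurable (f : Ω → ℝ) μ := Lp.aestronglyMeasurable f
    have hFtop : eLpNorm (f : Ω → ℝ) p μ ≠ ∞ := Lp.eLpNorm_ne_top f
    -- coordinate bound through an auxiliary function v
    have coord : ∀ (i : Fin k) (v : Ω → ℝ), AEStronglyMeasurable v μ →
        eLpNorm v p μ ≠ ∞ →
        (∀ ω, G i ω * (f : Ω → ℝ) ω = G i ω * v ω) →
        ‖∫ ω, g i ω * f ω ∂μ‖ ≤ (eLpNorm v p μ).toReal := by
      intro i v hv hvtop heq
      have hae : (fun ω => (g i : Ω → ℝ) ω * (f : Ω → ℝ) ω) =ᵐ[μ]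
          fun ω => G i ω * v ω := by
        filter_upwards [hGae i] with ω hω
        rw [hω]; exact heq ω
      calc ‖∫ ω, g i ω * f ω ∂μ‖ = ‖∫ ω, G i ω * v ω ∂μ‖ := by
            rw [integral_congr_ae hae]
        _ ≤ (∫⁻ ω, ENNReal.ofReal ‖G i ω * v ω‖ ∂μ).toReal :=
            norm_integral_le_lintegral_norm _
        _ = (eLpNorm (fun ω => G i ω * v ω) 1 μ).toReal := by
            rw [eLpNorm_one_eq_lintegral_enorm]
            simp_rw [ofReal_norm]
        _ ≤ (eLpNorm v p μ).toReal := by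
            refine ENNReal.toReal_mono hvtop ?_
            refine le_trans (holder_aux hpq (hGsm i).aestronglyMeasurable hv) ?_
            calc eLpNorm (G i) q μ * eLpNorm v p μ ≤ 1 * eLpNorm v p μ :=
                  mul_le_mul_left (hGq i) _
              _ = eLpNorm v p μ := one_mul _
    by_cases hptop : p = ∞
    · subst hptop
      rw [show ((WithLp.equiv ∞ (Fin k → ℝ)).symm (fun i => ∫ ω, g i ω * f ω ∂μ) :
          PiLp ∞ fun _ : Fin k => ℝ) = _ from rfl, PiLp.norm_eq_ciSup]
      refine Real.iSup_le (fun i => ?_) (norm_nonneg f)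
      simp only [WithLp.equiv_symm_apply, PiLp.toLp_apply]
      have := coord i (f : Ω → ℝ) hF hFtop (fun _ => rfl)
      rwa [← Lp.norm_def] at this
    · set pr := p.toReal with hprdef
      have hpr : 0 < pr := ENNReal.toReal_pos hp0 hptop
      set v : Fin k → Ω → ℝ := fun i => (A i).indicator (f : Ω → ℝ) with hvdef
      have hv : ∀ i, AEStronglyMeasurable (v i) μ := fun i => hF.indicator (hAm i)
      set C : Fin k → ℝ≥0∞ := fun i => eLpNorm (v i) p μ with hCdef
      have hCle : ∀ i, C i ≤ eLpNorm (f : Ω → ℝ) p μ := fun i => eLpNorm_indicator_le _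
      have hCtop : ∀ i, C i ≠ ∞ := fun i => (lt_of_le_of_lt (hCle i) hFtop.lt_top).ne
      have heq : ∀ i ω, G i ω * (f : Ω → ℝ) ω = G i ω * v i ω := by
        intro i ω
        by_cases h : G i ω = 0
        · simp [h]
        · have hmem : ω ∈ A i := h
          rw [hvdef]; simp [Set.indicator_of_mem hmem]
      set H : Ω → ℝ≥0∞ := fun ω => (‖(f : Ω → ℝ) ω‖₊ : ℝ≥0∞) ^ pr with hHdef
      have hHmeas : AEMeasurable H μ := hF.enorm.pow aemeasurable_const
      have hCpow : ∀ i, C i ^ pr = ∫⁻ ω, (A i).indicator H ω ∂μ := by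
        intro i
        show eLpNorm (v i) p μ ^ pr = _
        rw [eLpNorm_eq_lintegral_rpow_enorm_toReal hp0 hptop, one_div,
          ENNReal.rpow_inv_rpow hpr.ne']
        refine lintegral_congr fun ω => ?_
        by_cases h : ω ∈ A i
        · rw [Set.indicator_of_mem h, hHdef, hvdef]
          simp [Set.indicator_of_mem h]
          rfl
        · rw [Set.indicator_of_notMem h, hvdef]
          simp [Set.indicator_of_notMem h, ENNReal.zero_rpow_of_pos hpr]
          exact hpr
      have hdisj' : ∀ᵐ ω ∂μ, ∀ i j : Fin k, i ≠ j → G i ω * G j ω = 0 := by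
        rw [ae_all_iff]; intro i
        rw [ae_all_iff]; intro j
        by_cases hij : i = j
        · exact Filter.Eventually.of_forall fun ω h => absurd hij h
        · filter_upwards [hdisj i j hij, hGae i, hGae j] with ω h h1 h2 _
          rw [← h1, ← h2]; exact h
      have hsum_le : ∀ᵐ ω ∂μ, ∑ i, (A i).indicator H ω ≤ H ω := by
        filter_upwards [hdisj'] with ω hω
        by_cases hex : ∃ i, ω ∈ A i
        · obtain ⟨i0, hi0⟩ := hex
          rw [Finset.sum_eq_single i0]
          · rw [Set.indicator_of_mem hi0]
          · intro j _ hj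
            refine Set.indicator_of_notMem (fun hjA => ?_) _
            exact mul_ne_zero (hjA : G j ω ≠ 0) (hi0 : G i0 ω ≠ 0) (hω j i0 hj)
          · intro h; exact absurd (Finset.mem_univ i0) h
        · push_neg at hex
          have : ∀ j ∈ Finset.univ, (A j).indicator H ω = 0 :=
            fun j _ => Set.indicator_of_notMem (hex j) _
          rw [Finset.sum_eq_zero this]
          exact zero_le
      have key : ∑ i, C i ^ pr ≤ eLpNorm (f : Ω → ℝ) p μ ^ pr := by
        calc ∑ i, C i ^ pr = ∑ i, ∫⁻ ω, (A i).indicator H ω ∂μ := by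
              exact Finset.sum_congr rfl fun i _ => hCpow i
          _ = ∫⁻ ω, ∑ i, (A i).indicator H ω ∂μ :=
              (lintegral_finset_sum' Finset.univ
                (fun i _ => hHmeas.indicator (hAm i))).symm
          _ ≤ ∫⁻ ω, H ω ∂μ := lintegral_mono_ae hsum_le
          _ = eLpNorm (f : Ω → ℝ) p μ ^ pr := by
              rw [eLpNorm_eq_lintegral_rpow_enorm_toReal hp0 hptop, one_div,
                ENNReal.rpow_inv_rpow hpr.ne']
              rfl
      rw [show ((WithLp.equiv p (Fin k → ℝ)).symm (fun i => ∫ ω, g i ω * f ω ∂μ) :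
          PiLp p fun _ : Fin k => ℝ) = _ from rfl, PiLp.norm_eq_sum hpr]
      simp only [WithLp.equiv_symm_apply, PiLp.toLp_apply]
      calc (∑ i, ‖∫ ω, g i ω * f ω ∂μ‖ ^ pr) ^ (1 / pr)
          ≤ (∑ i, (C i).toReal ^ pr) ^ (1 / pr) := by
            refine Real.rpow_le_rpow (Finset.sum_nonneg fun i _ => by positivity)
              (Finset.sum_le_sum fun i _ => ?_) (by positivity)
            exact Real.rpow_le_rpow (norm_nonneg _)
              (coord i (v i) (hv i) (hCtop i) (heq i)) hpr.le
        _ = ((∑ i, C i ^ pr).toReal) ^ (1 / pr) := by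
            rw [ENNReal.toReal_sum (fun i _ => ENNReal.rpow_ne_top_of_nonneg hpr.le (hCtop i))]
            congr 1
            exact Finset.sum_congr rfl fun i _ => ENNReal.toReal_rpow _ _
        _ ≤ ((eLpNorm (f : Ω → ℝ) p μ ^ pr).toReal) ^ (1 / pr) := by
            refine Real.rpow_le_rpow ENNReal.toReal_nonneg
              (ENNReal.toReal_mono (ENNReal.rpow_ne_top_of_nonneg hpr.le hFtop) key)
              (by positivity)
        _ = ‖f‖ := by
            rw [← ENNReal.toReal_rpow, ← Lp.norm_def, one_div,
              Real.rpow_rpow_inv (norm_nonneg _) hpr.ne']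
  · intro hpos f hf i
    refine MeasureTheory.integral_nonneg_of_ae ?_
    filter_upwards [hpos i, hf] with ω h1 h2
    exact mul_nonneg h1 h2
end
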